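/- arXiv:2507.09125 — 7 statements merged into one kernel-verified Lean document; each statement's English description precedes it below -/
import Mathlib

section
/- Let F be a finite field of odd cardinality q, let ψ : F → ℂ be a nontrivial additive character, let η be the quadratic character of F, and let ρ be any multiplicative character of F. Then the Gauss sums satisfy the duplication relation τ(ρ²)·τ(η) = ρ(4)·τ(ρ)·τ(ρ·η). -/
open Finset

section Aux

variable {F : Type*} [Field F] [Fintype F] [DecidableEq F]

/-- Any nontrivial quadratic character with values in `ℂ` is the quadratic character. -/
lemma quadChar_unique (hF : ringChar F ≠ 2) {η : MulChar F ℂ} (hη : η ≠ 1) (hη2 : η ^ 2 = 1) :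
    η = (quadraticChar F).ringHomComp (Int.castRingHom ℂ) := by
  classical
  obtain ⟨g, hg⟩ := IsCyclic.exists_generator (α := Fˣ)
  set χ : MulChar F ℂ := (quadraticChar F).ringHomComp (Int.castRingHom ℂ) with hχ
  have key : ∀ θ : MulChar F ℂ, θ ≠ 1 → θ ^ 2 = 1 → θ (g : F) = -1 := by
    intro θ hθ hθ2
    have h1 : θ (g : F) ^ 2 = 1 := by
      rw [← MulChar.pow_apply_coe, hθ2, MulChar.one_apply_coe]
    have h2 : (θ (g : F) - 1) * (θ (g : F) + 1) = 0 := by linear_combination h1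
    rcases mul_eq_zero.mp h2 with h | h
    · exact absurd ((MulChar.eq_iff hg θ 1).mpr
        (by rw [MulChar.one_apply_coe, sub_eq_zero.mp h])) hθ
    · exact eq_neg_of_add_eq_zero_left h
  have hχ2 : χ ^ 2 = 1 := ((quadraticChar_isQuadratic F).comp _).sq_eq_one
  have hχ1 : χ ≠ 1 := by
    obtain ⟨a, ha⟩ := quadraticChar_exists_neg_one hF
    intro h
    have ha0 : a ≠ 0 := by
      intro h0
      rw [h0, quadraticChar_zero] at ha
      exact absurd ha (by norm_num)
    have : χ a = 1 := by rw [h, MulChar.one_apply (Ne.isUnit ha0)]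
    rw [hχ, MulChar.ringHomComp_apply, ha] at this
    norm_num at this
  rw [MulChar.eq_iff hg, key η hη hη2, key χ hχ1 hχ2]

/-- Counting squares: `∑ₛ f(s²) = ∑ᵤ (1 + η(u)) f(u)` for the quadratic character `η`. -/
lemma sum_sq_eq (hF : ringChar F ≠ 2) (f : F → ℂ) :
    ∑ s : F, f (s ^ 2) =
      ∑ u : F, (1 + ((quadraticChar F u : ℤ) : ℂ)) * f u := by
  classical
  rw [← Finset.sum_fiberwise_of_maps_to (g := fun s : F => s ^ 2)
    (fun x _ => Finset.mem_univ _) (fun s => f (s ^ 2))]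
  refine Finset.sum_congr rfl fun u _ => ?_
  have hcard : ({x : F | x ^ 2 = u}.toFinset.card : ℤ) = quadraticChar F u + 1 :=
    quadraticChar_card_sqrts hF u
  have hfe : {x : F | x ^ 2 = u}.toFinset = Finset.univ.filter (fun x : F => x ^ 2 = u) := by
    ext x; simp
  have : ∑ s ∈ Finset.univ.filter (fun s : F => s ^ 2 = u), f (s ^ 2)
      = ∑ s ∈ Finset.univ.filter (fun s : F => s ^ 2 = u), f u := by
    refine Finset.sum_congr rfl fun s hs => ?_
    rw [(Finset.mem_filter.mp hs).2]
  rw [this, Finset.sum_const, nsmul_eq_mul]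
  congr 1
  rw [← hfe]
  have := congrArg (fun n : ℤ => (n : ℂ)) hcard
  push_cast at this ⊢
  rw [this]; ring

/-- The key Jacobi sum identity `J(ρ,η) = ρ(4) J(ρ,ρ)`. -/
lemma jacobi_key (hF : ringChar F ≠ 2) {ρ : MulChar F ℂ} (hρ : ρ ≠ 1) :
    jacobiSum ρ ((quadraticChar F).ringHomComp (Int.castRingHom ℂ))
      = ρ 4 * jacobiSum ρ ρ := by
  classical
  set χ : MulChar F ℂ := (quadraticChar F).ringHomComp (Int.castRingHom ℂ) with hχ
  have h2 : (2 : F) ≠ 0 := Ring.two_ne_zero hF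
  have step1 : ρ 4 * jacobiSum ρ ρ = ∑ t : F, ρ (1 - (1 - 2 * t) ^ 2) := by
    rw [jacobiSum, Finset.mul_sum]
    refine Finset.sum_congr rfl fun t _ => ?_
    rw [← map_mul, ← map_mul]
    congr 1
    ring
  have step2 : ∑ t : F, ρ (1 - (1 - 2 * t) ^ 2) = ∑ s : F, ρ (1 - s ^ 2) := by
    refine Fintype.sum_bijective (fun t : F => 1 - 2 * t) ?_ _ _ (fun t => rfl)
    constructor
    · intro a b hab
      simp only [sub_right_inj] at hab
      exact mul_left_cancel₀ h2 hab
    · intro y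
      exact ⟨(1 - y) / 2, by field_simp; ring⟩
  have step3 : ∑ s : F, ρ (1 - s ^ 2)
      = ∑ u : F, (1 + ((quadraticChar F u : ℤ) : ℂ)) * ρ (1 - u) :=
    sum_sq_eq hF (fun u => ρ (1 - u))
  have step4 : ∑ u : F, (1 + ((quadraticChar F u : ℤ) : ℂ)) * ρ (1 - u)
      = ∑ u : F, ρ (1 - u) + jacobiSum χ ρ := by
    rw [jacobiSum, ← Finset.sum_add_distrib]
    refine Finset.sum_congr rfl fun u _ => ?_
    rw [hχ, MulChar.ringHomComp_apply, Int.coe_castRingHom]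
    ring
  have step5 : ∑ u : F, ρ (1 - u) = 0 := by
    have e := Equiv.sum_comp (Equiv.subLeft (1 : F)) (fun v => ρ v)
    simp only [Equiv.subLeft_apply] at e
    rw [e]
    exact MulChar.sum_eq_zero_of_ne_one hρ
  rw [step4, step5, zero_add, jacobiSum_comm χ ρ] at step3
  rw [step1, step2, step3]

end Aux

/-- Duplication relation for Gauss sums over a finite field of odd cardinality:
`τ(ρ²)·τ(η) = ρ(4)·τ(ρ)·τ(ρη)` where `η` is the quadratic character. -/
theorem gaussSum_duplication (F : Type*) [Field F] [Fintype F]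
    (hq : Odd (Fintype.card F))
    (ψ : AddChar F ℂ) (hψ : ψ ≠ 1)
    (η : MulChar F ℂ) (hη : η ≠ 1) (hη2 : η ^ 2 = 1)
    (ρ : MulChar F ℂ) :
    gaussSum (ρ ^ 2) ψ * gaussSum η ψ =
      ρ 4 * (gaussSum ρ ψ * gaussSum (ρ * η) ψ) := by
  classical
  have hF : ringChar F ≠ 2 := by
    intro h
    have := FiniteField.even_card_of_char_two h
    rw [Nat.odd_iff] at hq
    omega
  have h2 : (2 : F) ≠ 0 := Ring.two_ne_zero hF
  have h4 : IsUnit (4 : F) := by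
    refine Ne.isUnit ?_
    have : (4 : F) = 2 * 2 := by norm_num
    rw [this]
    exact mul_ne_zero h2 h2
  have hη4 : η 4 = 1 := by
    have : (4 : F) = 2 * 2 := by norm_num
    rw [this, map_mul, ← sq, ← MulChar.pow_apply' η two_ne_zero, hη2,
      MulChar.one_apply (Ne.isUnit h2)]
  by_cases hρ2 : ρ ^ 2 = 1
  · by_cases hρ1 : ρ = 1
    · subst hρ1
      rw [one_pow, one_mul, MulChar.one_apply h4, one_mul]
    · -- ρ is the quadratic character, so ρ = η
      have hρη : ρ = η :=
        (quadChar_unique hF hρ1 hρ2).trans (quadChar_unique hF hη hη2).symm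
      subst hρη
      rw [hρ2, ← sq, hρ2, hη4, one_mul]
      ring
  · have hρ1 : ρ ≠ 1 := fun h => hρ2 (by rw [h, one_pow])
    have hρρ : ρ * ρ ≠ 1 := by rwa [← sq]
    have hρη : ρ * η ≠ 1 := by
      intro h
      have hee : ρ = η⁻¹ := eq_inv_of_mul_eq_one_left h
      have : η⁻¹ = η := by
        have := hη2
        rw [sq] at this
        exact inv_eq_of_mul_eq_one_left this
      rw [hee, this] at hρ2
      exact hρ2 hη2
    have hψp : ψ.IsPrimitive := AddChar.IsPrimitive.of_ne_one hψ
    have hcard : ((Fintype.card F : ℂ)) ≠ 0 :=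
      Nat.cast_ne_zero.mpr Fintype.card_ne_zero
    have hgρ : gaussSum ρ ψ ≠ 0 := gaussSum_ne_zero_of_nontrivial hcard hρ1 hψp
    have J1 : gaussSum (ρ * ρ) ψ * jacobiSum ρ ρ = gaussSum ρ ψ * gaussSum ρ ψ :=
      jacobiSum_mul_nontrivial hρρ ψ
    have J2 : gaussSum (ρ * η) ψ * jacobiSum ρ η = gaussSum ρ ψ * gaussSum η ψ :=
      jacobiSum_mul_nontrivial hρη ψ
    have key : jacobiSum ρ η = ρ 4 * jacobiSum ρ ρ := by
      rw [quadChar_unique hF hη hη2]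
      exact jacobi_key hF hρ1
    have hJρρ : jacobiSum ρ ρ ≠ 0 := by
      intro h
      rw [h, mul_zero] at J1
      exact (mul_ne_zero hgρ hgρ) J1.symm
    apply mul_right_cancel₀ hJρρ
    calc gaussSum (ρ ^ 2) ψ * gaussSum η ψ * jacobiSum ρ ρ
        = (gaussSum (ρ * ρ) ψ * jacobiSum ρ ρ) * gaussSum η ψ := by rw [← sq]; ring
      _ = (gaussSum ρ ψ * gaussSum ρ ψ) * gaussSum η ψ := by rw [J1]
      _ = gaussSum ρ ψ * (gaussSum (ρ * η) ψ * jacobiSum ρ η) := by rw [J2]; ring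
      _ = gaussSum ρ ψ * (gaussSum (ρ * η) ψ * (ρ 4 * jacobiSum ρ ρ)) := by rw [key]
      _ = ρ 4 * (gaussSum ρ ψ * gaussSum (ρ * η) ψ) * jacobiSum ρ ρ := by ring
end

section
/- Let F be a finite field of odd cardinality q, let ψ : F → ℂ be a nontrivial additive character, let η be the quadratic character of F, and let χ₀ and χ be nontrivial multiplicative characters of F. Consider the sum S₂' := ∑ over tuples (u,v,x₁,x₂,y₁,y₂) ∈ F⁶ satisfying x₁x₂ = u·v·y₁·y₂ of χ₀(u)·χ₀⁻¹(v)·χ(y₁)·η(y₂)·ψ(x₁+x₂−y₁−y₂). Then S₂' = 0 if χ₀ ≠ η, and S₂' = −η(−1)·q·(q−1)·∑_{t ∈ F} η(t)·χ(t)·ψ(−t) if χ₀ = η. -/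
set_option linter.unusedSectionVars false

open Finset

section S2Aux

variable {F : Type*} [Field F] [Fintype F] [DecidableEq F]

private lemma S2aux_quad_char_unique (χ₁ χ₂ : MulChar F ℂ) (h₁ : χ₁ ≠ 1) (h₁2 : χ₁ ^ 2 = 1)
    (h₂ : χ₂ ≠ 1) (h₂2 : χ₂ ^ 2 = 1) : χ₁ = χ₂ := by
  obtain ⟨g, hg⟩ := IsCyclic.exists_generator (α := Fˣ)
  have key : ∀ (χ : MulChar F ℂ), χ ≠ 1 → χ ^ 2 = 1 → χ (g : F) = -1 := by
    intro χ h h2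
    have hsq : χ (g : F) ^ 2 = 1 := by
      rw [← MulChar.pow_apply_coe, h2, MulChar.one_apply_coe]
    have hfac : (χ (g : F) - 1) * (χ (g : F) + 1) = 0 := by linear_combination hsq
    rcases mul_eq_zero.mp hfac with h' | h'
    · exfalso
      apply h
      apply MulChar.ext
      intro a
      obtain ⟨n, hn⟩ := (mem_powers_iff_mem_zpowers).mpr (hg a)
      rw [← hn, MulChar.one_apply_coe, Units.val_pow_eq_pow_val, map_pow,
        sub_eq_zero.mp h', one_pow]
    · linear_combination h'
  apply MulChar.ext
  intro a
  obtain ⟨n, hn⟩ := (mem_powers_iff_mem_zpowers).mpr (hg a)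
  rw [← hn, Units.val_pow_eq_pow_val, map_pow, map_pow, key χ₁ h₁ h₁2, key χ₂ h₂ h₂2]

private lemma S2aux_eta_sq_self (η : MulChar F ℂ) (hη2 : η ^ 2 = 1) {a : F} (ha : a ≠ 0) :
    η a * η a = 1 := by
  have := MulChar.pow_apply' η (two_ne_zero) a
  rw [hη2, MulChar.one_apply (isUnit_iff_ne_zero.mpr ha)] at this
  rw [← pow_two]; exact this.symm

private lemma S2aux_eta_inv_self (η : MulChar F ℂ) (hη2 : η ^ 2 = 1) (a : F) :
    η a⁻¹ = η a := by
  by_cases ha : a = 0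
  · simp [ha]
  · have h1 : η a * η a = 1 := S2aux_eta_sq_self η hη2 ha
    have h2 : η a⁻¹ * η a = 1 := by
      rw [← map_mul, inv_mul_cancel₀ ha, map_one]
    linear_combination (η a) * h2 - (η a⁻¹) * h1

private lemma S2aux_sum_one_char :
    ∑ u : F, (1 : MulChar F ℂ) u = (Fintype.card F : ℂ) - 1 := by
  have h : ∀ u : F, (1 : MulChar F ℂ) u = 1 - (if u = 0 then 1 else 0) := by
    intro u
    by_cases hu : u = 0
    · simp [hu, MulChar.map_zero]
    · simp [hu, MulChar.one_apply (isUnit_iff_ne_zero.mpr hu)]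
  rw [Finset.sum_congr rfl fun u _ => h u, Finset.sum_sub_distrib,
    Finset.sum_const, Finset.sum_ite_eq' Finset.univ (0 : F) (fun _ => (1 : ℂ))]
  simp [Finset.card_univ]

private lemma S2aux_Kred (χ₀ : MulChar F ℂ) (hχ₀ : χ₀ ≠ 1) (a b : F) :
    (∑ u : F, ∑ v : F, if a = u * v * b then χ₀ u * χ₀⁻¹ v else 0)
      = χ₀ (a⁻¹ * b) * ∑ u : F, (χ₀ ^ 2) u := by
  by_cases hb : b = 0
  · subst hb
    by_cases ha : a = 0
    · subst ha
      simp only [mul_zero, eq_self_iff_true, if_true, inv_zero, zero_mul, MulChar.map_zero]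
      have h1 : ∀ u : F, (∑ v : F, χ₀ u * χ₀⁻¹ v) = χ₀ u * ∑ v : F, χ₀⁻¹ v :=
        fun u => (Finset.mul_sum _ _ _).symm
      rw [Finset.sum_congr rfl fun u _ => h1 u]
      have : ∑ v : F, χ₀⁻¹ v = 0 := MulChar.sum_eq_zero_of_ne_one (by simpa using hχ₀)
      simp [this]
    · simp [ha, MulChar.map_zero]
  · have hstep : ∀ u : F, (∑ v : F, if a = u * v * b then χ₀ u * χ₀⁻¹ v else 0)
        = χ₀ (a⁻¹ * b) * (χ₀ ^ 2) u := by
      intro u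
      by_cases hu : u = 0
      · subst hu
        simp [MulChar.map_zero, MulChar.pow_apply' χ₀ (two_ne_zero) (0 : F)]
      · have hcond : ∀ v : F, (a = u * v * b) ↔ (v = a * b⁻¹ * u⁻¹) := by
          intro v
          constructor
          · intro h; rw [h]; field_simp; try ring
          · intro h; rw [h]; field_simp; try ring
        rw [Finset.sum_congr rfl fun v _ => if_congr (hcond v) rfl rfl]
        rw [Finset.sum_ite_eq' Finset.univ (a * b⁻¹ * u⁻¹) (fun v => χ₀ u * χ₀⁻¹ v),
          if_pos (Finset.mem_univ _)]
        rw [MulChar.inv_apply', show (a * b⁻¹ * u⁻¹)⁻¹ = a⁻¹ * b * u by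
          rw [mul_inv_rev, mul_inv_rev, inv_inv, inv_inv]; ring]
        rw [show a⁻¹ * b * u = (a⁻¹ * b) * u by ring, map_mul,
          MulChar.pow_apply' χ₀ (two_ne_zero) u]
        ring
    rw [Finset.sum_congr rfl fun u _ => hstep u, ← Finset.mul_sum]

private lemma S2aux_sum_reorder6 {M : Type*} [AddCommMonoid M] {α : Type*} [Fintype α]
    (g : α → α → α → α → α → α → M) :
    (∑ u : α, ∑ v : α, ∑ a : α, ∑ b : α, ∑ c : α, ∑ d : α, g u v a b c d)
      = ∑ a : α, ∑ b : α, ∑ c : α, ∑ d : α, ∑ u : α, ∑ v : α, g u v a b c d := by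
  conv_lhs => enter [2, u]; rw [Finset.sum_comm]
  conv_lhs => enter [2, u, 2, a]; rw [Finset.sum_comm]
  conv_lhs => enter [2, u, 2, a, 2, b]; rw [Finset.sum_comm]
  conv_lhs => enter [2, u, 2, a, 2, b, 2, c]; rw [Finset.sum_comm]
  rw [Finset.sum_comm]
  conv_lhs => enter [2, a]; rw [Finset.sum_comm]
  conv_lhs => enter [2, a, 2, b]; rw [Finset.sum_comm]
  conv_lhs => enter [2, a, 2, b, 2, c]; rw [Finset.sum_comm]

private lemma S2aux_sum_factor4 {α : Type*} [Fintype α] (C : ℂ) (f g h k : α → ℂ) :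
    (∑ a : α, ∑ b : α, ∑ c : α, ∑ d : α, C * (f a * (g b * (h c * k d))))
      = C * ((∑ a : α, f a) * ((∑ b : α, g b) * ((∑ c : α, h c) * (∑ d : α, k d)))) := by
  simp only [← Finset.mul_sum, ← Finset.sum_mul]

end S2Aux

/-- Evaluation of the sum `S₂'` from the appendix: it vanishes unless `χ₀ = η`,
in which case it equals `−η(−1)·q·(q−1)·∑_t η(t)χ(t)ψ(−t)`. -/
theorem S2_sum_eval (F : Type*) [Field F] [Fintype F] [DecidableEq F]
    (hq : Odd (Fintype.card F))
    (ψ : AddChar F ℂ) (hψ : ψ ≠ 1)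
    (η : MulChar F ℂ) (hη : η ≠ 1) (hη2 : η ^ 2 = 1)
    (χ₀ χ : MulChar F ℂ) (hχ₀ : χ₀ ≠ 1) (hχ : χ ≠ 1)
    (S : ℂ)
    (hS : S = ∑ u : F, ∑ v : F, ∑ x₁ : F, ∑ x₂ : F, ∑ y₁ : F, ∑ y₂ : F,
      if x₁ * x₂ = u * v * y₁ * y₂ then
        χ₀ u * χ₀⁻¹ v * χ y₁ * η y₂ * ψ (x₁ + x₂ - y₁ - y₂) else 0) :
    (χ₀ ≠ η → S = 0) ∧
    (χ₀ = η → S = -(η (-1)) * (Fintype.card F : ℂ) * ((Fintype.card F : ℂ) - 1) *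
      ∑ t : F, η t * χ t * ψ (-t)) := by
  have hprim : ψ.IsPrimitive := AddChar.IsPrimitive.of_ne_one hψ
  have hquad : η.IsQuadratic := by
    intro a
    by_cases ha : a = 0
    · left; simp [ha, MulChar.map_zero]
    · right
      have h1 : (η a - 1) * (η a + 1) = 0 := by
        linear_combination S2aux_eta_sq_self η hη2 ha
      rcases mul_eq_zero.mp h1 with h' | h'
      · left; linear_combination h'
      · right; linear_combination h'
  have hgauss : (∑ a : F, η a * ψ a) * (∑ a : F, η a * ψ a)
      = η (-1) * (Fintype.card F : ℂ) := by
    have := gaussSum_sq hη hquad hprim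
    rw [pow_two] at this
    exact this
  have hKC : ∀ a b : F, (∑ u : F, ∑ v : F, if a = u * v * b then χ₀ u * χ₀⁻¹ v else 0)
      = (if χ₀ = η then ((Fintype.card F : ℂ) - 1) else 0) * (η a * η b) := by
    intro a b
    rw [S2aux_Kred χ₀ hχ₀ a b]
    by_cases hcase : χ₀ = η
    · rw [if_pos hcase, hcase, hη2, S2aux_sum_one_char, map_mul,
        S2aux_eta_inv_self η hη2 a]
      ring
    · have h2 : χ₀ ^ 2 ≠ 1 := fun h => hcase (S2aux_quad_char_unique χ₀ η hχ₀ h hη hη2)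
      rw [MulChar.sum_eq_zero_of_ne_one h2, if_neg hcase]
      ring
  have hd : ∑ d : F, η d * (η d * ψ (-d)) = -1 := by
    have h0 : ∀ d : F, η d * (η d * ψ (-d)) = ψ (-d) - (if d = 0 then ψ (-d) else 0) := by
      intro d
      by_cases hd0 : d = 0
      · simp [hd0, MulChar.map_zero]
      · rw [if_neg hd0, sub_zero, ← mul_assoc, S2aux_eta_sq_self η hη2 hd0, one_mul]
    rw [Finset.sum_congr rfl fun d _ => h0 d, Finset.sum_sub_distrib]
    have hψ0 : ψ ≠ 0 := fun h => hψ (by rw [h]; rfl)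
    have hzero : ∑ d : F, ψ (-d) = 0 := by
      rw [Fintype.sum_equiv (Equiv.neg F) (fun d => ψ (-d)) (fun d => ψ d) (fun d => by simp)]
      exact AddChar.sum_eq_zero_iff_ne_zero.mpr hψ0
    rw [hzero, Finset.sum_ite_eq' Finset.univ (0 : F) (fun d => ψ (-d))]
    simp
  have hstep : ∀ a b c d : F,
      (∑ u : F, ∑ v : F, if a * b = u * v * c * d then
          χ₀ u * χ₀⁻¹ v * χ c * η d * ψ (a + b - c - d) else 0)
      = (if χ₀ = η then ((Fintype.card F : ℂ) - 1) else 0) *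
          ((η a * ψ a) * ((η b * ψ b) * ((η c * (χ c * ψ (-c))) * (η d * (η d * ψ (-d)))))) := by
    intro a b c d
    have e1 : ∀ u v : F, (if a * b = u * v * c * d then
          χ₀ u * χ₀⁻¹ v * χ c * η d * ψ (a + b - c - d) else 0)
        = (if a * b = u * v * (c * d) then χ₀ u * χ₀⁻¹ v else 0)
            * (χ c * η d * ψ (a + b - c - d)) := by
      intro u v
      rw [show u * v * (c * d) = u * v * c * d from by ring]
      by_cases h : a * b = u * v * c * d
      · simp only [if_pos h]; ring
      · simp only [if_neg h, zero_mul]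
    calc (∑ u : F, ∑ v : F, if a * b = u * v * c * d then
            χ₀ u * χ₀⁻¹ v * χ c * η d * ψ (a + b - c - d) else 0)
        = (∑ u : F, ∑ v : F, if a * b = u * v * (c * d) then χ₀ u * χ₀⁻¹ v else 0)
            * (χ c * η d * ψ (a + b - c - d)) := by
          rw [Finset.sum_congr rfl fun u _ => Finset.sum_congr rfl fun v _ => e1 u v]
          simp only [← Finset.sum_mul]
      _ = ((if χ₀ = η then ((Fintype.card F : ℂ) - 1) else 0) * (η (a * b) * η (c * d)))
            * (χ c * η d * ψ (a + b - c - d)) := by rw [hKC (a * b) (c * d)]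
      _ = (if χ₀ = η then ((Fintype.card F : ℂ) - 1) else 0) *
            ((η a * ψ a) * ((η b * ψ b) * ((η c * (χ c * ψ (-c))) * (η d * (η d * ψ (-d)))))) := by
          rw [map_mul η a b, map_mul η c d,
            show a + b - c - d = a + (b + (-c + -d)) from by ring,
            AddChar.map_add_eq_mul, AddChar.map_add_eq_mul, AddChar.map_add_eq_mul]
          ring
  have key : S = (if χ₀ = η then ((Fintype.card F : ℂ) - 1) else 0) *
      ((∑ a : F, η a * ψ a) * ((∑ b : F, η b * ψ b) *
        ((∑ t : F, η t * χ t * ψ (-t)) * (-1)))) := by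
    rw [hS, S2aux_sum_reorder6]
    refine Eq.trans (Finset.sum_congr rfl fun a _ => Finset.sum_congr rfl fun b _ =>
      Finset.sum_congr rfl fun c _ => Finset.sum_congr rfl fun d _ => hstep a b c d) ?_
    rw [S2aux_sum_factor4, hd]
    rw [show (∑ c : F, η c * (χ c * ψ (-c))) = ∑ t : F, η t * χ t * ψ (-t) from
      Finset.sum_congr rfl fun t _ => (mul_assoc _ _ _).symm]
  constructor
  · intro hne
    rw [key, if_neg hne]
    ring
  · intro heq
    rw [key, if_pos heq]
    linear_combination (-(((Fintype.card F : ℂ) - 1) * (∑ t : F, η t * χ t * ψ (-t)))) * hgauss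
end

section
/- Let ρ > 1 be a real number, let N ∈ ℕ, and let a : ℤ → ℂ satisfy a(n) = 0 for all n < −N. Let f : ℂ → ℂ be such that for every X ∈ ℂ with 0 < |X| < ρ the series ∑_{n ∈ ℤ} a(n)·Xⁿ converges (HasSum) to f(X). Define f₊(X) := ∑_{n ∈ ℕ} a(n)·Xⁿ. Then for every X with 0 < |X| < ρ and every ε with 0 < ε < min(1, ρ/|X|): f₊(X) = f(X) − (2πi)⁻¹ · ∮_{|z|=ε} f(X·z)/(1−z) dz, where ∮_{|z|=ε} denotes the circle integral over the circle of radius ε centered at 0 (Mathlib's circleIntegral). -/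
open Metric Set Complex Finset

private lemma circleIntegral_add' {f g : ℂ → ℂ} {c : ℂ} {R : ℝ}
    (hf : CircleIntegrable f c R) (hg : CircleIntegrable g c R) :
    (∮ z in C(c, R), (f z + g z)) = (∮ z in C(c, R), f z) + ∮ z in C(c, R), g z := by
  simp only [circleIntegral, smul_add, intervalIntegral.integral_add hf.out hg.out]

private lemma circleIntegral_finset_sum' {ι : Type} (s : Finset ι) (f : ι → ℂ → ℂ)
    {c : ℂ} {R : ℝ} (h : ∀ i ∈ s, CircleIntegrable (f i) c R) :
    (∮ z in C(c, R), ∑ i ∈ s, f i z) = ∑ i ∈ s, ∮ z in C(c, R), f i z := by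
  simp only [circleIntegral, Finset.smul_sum]
  rw [intervalIntegral.integral_finset_sum (fun i hi => (h i hi).out)]

private lemma oneSub_ne {ε : ℝ} (hε1 : ε < 1) {z : ℂ} (hz : z ∈ closedBall (0:ℂ) ε) :
    1 - z ≠ 0 := by
  intro h
  have hz1 : z = 1 := by linear_combination -h
  rw [hz1] at hz
  rw [mem_closedBall_zero_iff] at hz
  simp at hz
  linarith

private lemma int_inv_one_sub {ε : ℝ} (hε0 : 0 ≤ ε) (hε1 : ε < 1) :
    (∮ z in C(0, ε), (1 - z)⁻¹) = 0 := by
  have hd : ∀ z ∈ closedBall (0:ℂ) ε, DifferentiableAt ℂ (fun z : ℂ => (1 - z)⁻¹) z := by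
    intro z hz
    have h1 : DifferentiableAt ℂ (fun z : ℂ => 1 - z) z :=
      (differentiableAt_const (1:ℂ)).sub differentiableAt_id
    exact h1.inv (oneSub_ne hε1 hz)
  refine circleIntegral_eq_zero_of_differentiable_on_off_countable hε0
    Set.countable_empty (fun z hz => (hd z hz).continuousAt.continuousWithinAt) ?_
  intro z hz
  exact hd z (ball_subset_closedBall hz.1)

private lemma contOn_sphere {ε : ℝ} (hε0 : 0 < ε) (hε1 : ε < 1) (m : ℤ) :
    ContinuousOn (fun z : ℂ => z ^ m / (1 - z)) (sphere (0:ℂ) ε) := by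
  intro z hz
  rw [mem_sphere_zero_iff_norm] at hz
  have hz0 : z ≠ 0 := by intro h; rw [h] at hz; simp at hz; linarith
  have hz1 : (1:ℂ) - z ≠ 0 := by
    intro h
    have : z = 1 := by linear_combination -h
    rw [this] at hz; simp at hz; linarith
  exact (ContinuousAt.div (continuousAt_zpow₀ _ _ (Or.inl hz0))
    ((continuousAt_const.sub continuousAt_id)) hz1).continuousWithinAt

private lemma int_zpow_inv_one_sub {ε : ℝ} (hε0 : 0 < ε) (hε1 : ε < 1) (j : ℕ) :
    (∮ z in C(0, ε), z ^ (-(j:ℤ) - 1) / (1 - z)) = 2 * Real.pi * Complex.I := by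
  induction j with
  | zero =>
    have h1 : EqOn (fun z : ℂ => z ^ (-(0:ℤ) - 1) / (1 - z))
        (fun z : ℂ => (z - 0)⁻¹ + (1 - z)⁻¹) (sphere (0:ℂ) ε) := by
      intro z hz
      rw [mem_sphere_zero_iff_norm] at hz
      have hz0 : z ≠ 0 := by intro h; rw [h] at hz; simp at hz; linarith
      have hz1 : (1:ℂ) - z ≠ 0 := by
        intro h
        have : z = 1 := by linear_combination -h
        rw [this] at hz; simp at hz; linarith
      show z ^ (-(0:ℤ) - 1) / (1 - z) = (z - 0)⁻¹ + (1 - z)⁻¹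
      rw [show (-(0:ℤ) - 1) = -1 by ring, zpow_neg_one, sub_zero]
      field_simp
      ring
    rw [show ((0:ℕ):ℤ) = 0 from rfl, circleIntegral.integral_congr hε0.le h1]
    have hI1 : CircleIntegrable (fun z : ℂ => (z - 0)⁻¹) 0 ε := by
      apply ContinuousOn.circleIntegrable hε0.le
      intro z hz
      rw [mem_sphere_zero_iff_norm] at hz
      have hz0 : z ≠ 0 := by intro h; rw [h] at hz; simp at hz; linarith
      exact ((continuousAt_id.sub continuousAt_const).inv₀
        (by simpa using hz0)).continuousWithinAt
    have hI2 : CircleIntegrable (fun z : ℂ => (1 - z)⁻¹) 0 ε := by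
      apply ContinuousOn.circleIntegrable hε0.le
      intro z hz
      rw [mem_sphere_zero_iff_norm] at hz
      have hz1 : (1:ℂ) - z ≠ 0 := by
        intro h
        have : z = 1 := by linear_combination -h
        rw [this] at hz; simp at hz; linarith
      exact ((continuousAt_const.sub continuousAt_id).inv₀ hz1).continuousWithinAt
    rw [circleIntegral_add' hI1 hI2,
      circleIntegral.integral_sub_inv_of_mem_ball (by simpa using hε0),
      int_inv_one_sub hε0.le hε1, add_zero]
  | succ j ih =>
    have h1 : EqOn (fun z : ℂ => z ^ (-((j:ℤ)+1) - 1) / (1 - z))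
        (fun z : ℂ => z ^ (-(j:ℤ) - 1) / (1 - z) + (z - 0) ^ (-(j:ℤ) - 2)) (sphere (0:ℂ) ε) := by
      intro z hz
      rw [mem_sphere_zero_iff_norm] at hz
      have hz0 : z ≠ 0 := by intro h; rw [h] at hz; simp at hz; linarith
      have hz1 : (1:ℂ) - z ≠ 0 := by
        intro h
        have : z = 1 := by linear_combination -h
        rw [this] at hz; simp at hz; linarith
      show z ^ (-((j:ℤ)+1) - 1) / (1 - z) = z ^ (-(j:ℤ) - 1) / (1 - z) + (z - 0) ^ (-(j:ℤ) - 2)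
      rw [sub_zero, show (-((j:ℤ)+1) - 1) = (-(j:ℤ) - 1) + (-1) by ring,
        show (-(j:ℤ) - 2) = (-(j:ℤ) - 1) + (-1) by ring,
        zpow_add₀ hz0, zpow_neg_one]
      field_simp
      ring
    have hmain : (∮ z in C(0, ε), z ^ (-((j:ℤ)+1) - 1) / (1 - z))
        = (∮ z in C(0, ε), z ^ (-(j:ℤ) - 1) / (1 - z))
          + ∮ z in C(0, ε), (z - 0) ^ (-(j:ℤ) - 2) := by
      rw [circleIntegral.integral_congr hε0.le h1]
      apply circleIntegral_add'
      · exact (contOn_sphere hε0 hε1 _).circleIntegrable hε0.le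
      · apply ContinuousOn.circleIntegrable hε0.le
        intro z hz
        rw [mem_sphere_zero_iff_norm] at hz
        have hz0 : z - 0 ≠ 0 := by intro h; rw [sub_zero] at h; rw [h] at hz; simp at hz; linarith
        exact ((continuousAt_id.sub continuousAt_const).zpow₀ _ (Or.inl hz0)).continuousWithinAt
    rw [show (-(((j:ℕ)+1 : ℕ) : ℤ) - 1) = (-((j:ℤ)+1) - 1) by push_cast; ring, hmain,
      circleIntegral.integral_sub_zpow_of_ne (show (-(j:ℤ) - 2) ≠ -1 by omega) 0 0 ε, add_zero, ih]

/-- Truncation of a Laurent series to its nonnegative part via a small circle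
integral: for `0 < |X| < ρ` and `0 < ε < min(1, ρ/|X|)`,
`f₊(X) = f(X) − (2πi)⁻¹ ∮_{|z|=ε} f(Xz)/(1−z) dz`. -/
theorem laurent_truncation_small_circle
    (ρ : ℝ) (hρ : 1 < ρ) (N : ℕ) (a : ℤ → ℂ)
    (ha : ∀ n : ℤ, n < -(N : ℤ) → a n = 0)
    (f : ℂ → ℂ)
    (hf : ∀ X : ℂ, 0 < ‖X‖ → ‖X‖ < ρ → HasSum (fun n : ℤ => a n * X ^ n) (f X))
    (X : ℂ) (hX0 : 0 < ‖X‖) (hXρ : ‖X‖ < ρ)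
    (ε : ℝ) (hε0 : 0 < ε) (hε : ε < min 1 (ρ / ‖X‖)) :
    (∑' n : ℕ, a (n : ℤ) * X ^ n)
      = f X - (2 * (Real.pi : ℂ) * Complex.I)⁻¹ *
          ∮ z in C(0, ε), f (X * z) / (1 - z) := by
  have hε1 : ε < 1 := lt_of_lt_of_le hε (min_le_left _ _)
  have hediv : ε < ρ / ‖X‖ := lt_of_lt_of_le hε (min_le_right _ _)
  -- choose r with ε < r < min 1 (ρ/‖X‖)
  set mb := min 1 (ρ / ‖X‖) with hmbdef
  set r : ℝ := (ε + mb) / 2 with hrdef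
  have hεmb : ε < mb := hε
  have hεr : ε < r := by simp only [hrdef]; linarith
  have hrmb : r < mb := by simp only [hrdef]; linarith
  have hr0 : 0 < r := lt_trans hε0 hεr
  have hr1 : r < 1 := lt_of_lt_of_le hrmb (min_le_left _ _)
  have hrρ : ‖X‖ * r < ρ := by
    have := lt_of_lt_of_le hrmb (min_le_right _ _)
    calc ‖X‖ * r < ‖X‖ * (ρ / ‖X‖) := by
          exact mul_lt_mul_of_pos_left this hX0
      _ = ρ := by rw [mul_comm]; exact div_mul_cancel₀ ρ (ne_of_gt hX0)
  -- the principal part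
  set Pc : ℂ → ℂ := fun w => ∑ k ∈ Finset.range N, a ((k:ℤ) - N) * w ^ ((k:ℤ) - N) with hPc
  -- decompose the Laurent series
  have key : ∀ w : ℂ, 0 < ‖w‖ → ‖w‖ < ρ →
      HasSum (fun n : ℕ => a (n:ℤ) * w ^ n) (f w - Pc w) := by
    intro w hw0 hwρ
    have h1 := hf w hw0 hwρ
    have he : Function.Injective (fun k : ℕ => (k : ℤ) - N) := fun x y h => by
      simpa using h
    have hsupp : ∀ m : ℤ, m ∉ Set.range (fun k : ℕ => (k : ℤ) - N) →
        a m * w ^ m = 0 := by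
      intro m hm
      have hmN : m < -(N:ℤ) := by
        by_contra h
        push_neg at h
        exact hm ⟨(m + N).toNat, by simp; omega⟩
      rw [ha m hmN, zero_mul]
    have h2 : HasSum ((fun m : ℤ => a m * w ^ m) ∘ (fun k : ℕ => (k : ℤ) - N)) (f w) :=
      (he.hasSum_iff hsupp).2 h1
    have h3 := (hasSum_nat_add_iff'
      (f := fun k : ℕ => a ((k:ℤ) - N) * w ^ ((k:ℤ) - N)) N).2 h2
    have h4 : (fun n : ℕ => a ((((n + N):ℕ):ℤ) - N) * w ^ ((((n + N):ℕ):ℤ) - N)) =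
        fun n : ℕ => a (n:ℤ) * w ^ n := by
      funext n
      have hc : (((n + N):ℕ):ℤ) - N = (n:ℤ) := by push_cast; ring
      rw [hc, zpow_natCast]
    rwa [h4] at h3
  -- value of the truncated series at X
  have hLHS : (∑' n : ℕ, a (n : ℤ) * X ^ n) = f X - Pc X := (key X hX0 hXρ).tsum_eq
  -- the nonnegative part as a function
  set g : ℂ → ℂ := fun w => ∑' n : ℕ, a (n:ℤ) * w ^ n with hg
  -- summable majorant on the ball of radius r
  have hsum : Summable (fun n : ℕ => ‖a (n:ℤ)‖ * (‖X‖ * r) ^ n) := by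
    set w0 : ℂ := ((‖X‖ * r : ℝ) : ℂ) with hw0def
    have hw0norm : ‖w0‖ = ‖X‖ * r := by
      rw [hw0def, Complex.norm_real, Real.norm_eq_abs, abs_of_pos (by positivity)]
    have hs1 : Summable (fun n : ℤ => a n * w0 ^ n) :=
      (hf w0 (by rw [hw0norm]; positivity) (by rw [hw0norm]; exact hrρ)).summable
    have hs2 : Summable (fun n : ℤ => ‖a n * w0 ^ n‖) := summable_norm_iff.mpr hs1
    have hs3 : Summable ((fun n : ℤ => ‖a n * w0 ^ n‖) ∘ (fun n : ℕ => (n:ℤ))) :=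
      hs2.comp_injective (fun x y h => by exact_mod_cast h)
    refine hs3.congr fun n => ?_
    show ‖a (n:ℤ) * w0 ^ (n:ℤ)‖ = ‖a (n:ℤ)‖ * (‖X‖ * r) ^ n
    rw [zpow_natCast, norm_mul, norm_pow, hw0norm]
  -- the function z ↦ g (X z) is differentiable on the ball of radius r
  have hGd0 : DifferentiableOn ℂ (fun z : ℂ => g (X * z)) (ball (0:ℂ) r) := by
    refine differentiableOn_tsum_of_summable_norm hsum ?_ isOpen_ball ?_
    · intro n
      exact (((differentiable_const X).mul differentiable_id).pow n).const_mul
        (a (n:ℤ)) |>.differentiableOn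
    · intro n z hz
      rw [mem_ball_zero_iff] at hz
      have : ‖a (n:ℤ) * (X * z) ^ n‖ = ‖a (n:ℤ)‖ * (‖X‖ * ‖z‖) ^ n := by
        rw [norm_mul, norm_pow, norm_mul]
      rw [this]
      gcongr
  have hball : ball (0:ℂ) r ⊆ {z : ℂ | (1:ℂ) - z ≠ 0} := by
    intro z hz
    rw [mem_ball_zero_iff] at hz
    intro h
    have : z = 1 := by linear_combination -h
    rw [this] at hz; simp at hz; linarith
  have hGd : DifferentiableOn ℂ (fun z : ℂ => g (X * z) / (1 - z)) (ball (0:ℂ) r) := by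
    refine hGd0.div ?_ (fun z hz => hball hz)
    exact ((differentiable_const (1:ℂ)).sub differentiable_id).differentiableOn
  -- the circle integral of the regular part vanishes
  have hG0 : (∮ z in C(0, ε), g (X * z) / (1 - z)) = 0 := by
    have hsub : closedBall (0:ℂ) ε ⊆ ball (0:ℂ) r := closedBall_subset_ball hεr
    refine circleIntegral_eq_zero_of_differentiable_on_off_countable hε0.le
      Set.countable_empty ((hGd.continuousOn).mono hsub) ?_
    intro z hz
    exact hGd.differentiableAt (isOpen_ball.mem_nhds
      (hsub (ball_subset_closedBall hz.1)))
  -- membership facts on the sphere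
  have hsph : ∀ z ∈ sphere (0:ℂ) ε, z ≠ 0 ∧ (1:ℂ) - z ≠ 0 ∧ 0 < ‖X * z‖ ∧ ‖X * z‖ < ρ := by
    intro z hz
    rw [mem_sphere_zero_iff_norm] at hz
    have hz0 : z ≠ 0 := by intro h; rw [h] at hz; simp at hz; linarith
    have hz1 : (1:ℂ) - z ≠ 0 := by
      intro h
      have : z = 1 := by linear_combination -h
      rw [this] at hz; simp at hz; linarith
    refine ⟨hz0, hz1, ?_, ?_⟩
    · rw [norm_mul, hz]; positivity
    · rw [norm_mul, hz]
      calc ‖X‖ * ε < ‖X‖ * r := by exact mul_lt_mul_of_pos_left hεr hX0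
        _ < ρ := hrρ
  -- split the integrand on the sphere
  have hEq : EqOn (fun z : ℂ => f (X * z) / (1 - z))
      (fun z : ℂ => g (X * z) / (1 - z) +
        ∑ k ∈ Finset.range N, (a ((k:ℤ) - N) * X ^ ((k:ℤ) - N)) * (z ^ ((k:ℤ) - N) / (1 - z)))
      (sphere (0:ℂ) ε) := by
    intro z hz
    obtain ⟨hz0, hz1, hXz0, hXzρ⟩ := hsph z hz
    have hfval : f (X * z) = g (X * z) + Pc (X * z) := by
      have h := (key (X * z) hXz0 hXzρ).tsum_eq
      show f (X * z) = (∑' n : ℕ, a (n:ℤ) * (X * z) ^ n) + Pc (X * z)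
      rw [h]; ring
    show f (X * z) / (1 - z) = g (X * z) / (1 - z) +
        ∑ k ∈ Finset.range N, (a ((k:ℤ) - N) * X ^ ((k:ℤ) - N)) * (z ^ ((k:ℤ) - N) / (1 - z))
    rw [hfval, add_div]
    congr 1
    rw [hPc]
    rw [Finset.sum_div]
    refine Finset.sum_congr rfl fun k hk => ?_
    rw [mul_zpow]
    ring
  -- integrability of the principal-part terms
  have hQint : ∀ k ∈ Finset.range N, CircleIntegrable
      (fun z : ℂ => (a ((k:ℤ) - N) * X ^ ((k:ℤ) - N)) * (z ^ ((k:ℤ) - N) / (1 - z))) 0 ε := by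
    intro k _
    exact (continuousOn_const.mul (contOn_sphere hε0 hε1 _)).circleIntegrable hε0.le
  have hQint' : CircleIntegrable (fun z : ℂ =>
      ∑ k ∈ Finset.range N, (a ((k:ℤ) - N) * X ^ ((k:ℤ) - N)) * (z ^ ((k:ℤ) - N) / (1 - z))) 0 ε := by
    apply ContinuousOn.circleIntegrable hε0.le
    exact continuousOn_finset_sum _ fun k _ => continuousOn_const.mul (contOn_sphere hε0 hε1 _)
  have hGint : CircleIntegrable (fun z : ℂ => g (X * z) / (1 - z)) 0 ε := by
    apply ContinuousOn.circleIntegrable hε0.le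
    exact (hGd.continuousOn).mono (sphere_subset_closedBall.trans (closedBall_subset_ball hεr))
  -- compute the circle integral
  have hInt : (∮ z in C(0, ε), f (X * z) / (1 - z)) = 2 * Real.pi * Complex.I * Pc X := by
    rw [circleIntegral.integral_congr hε0.le hEq, circleIntegral_add' hGint hQint', hG0, zero_add,
      circleIntegral_finset_sum' _ _ hQint]
    rw [hPc]
    rw [Finset.mul_sum]
    refine Finset.sum_congr rfl fun k hk => ?_
    rw [Finset.mem_range] at hk
    rw [circleIntegral.integral_const_mul]
    have hexp : ((k:ℤ) - N) = -((N - 1 - k : ℕ) : ℤ) - 1 := by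
      omega
    rw [hexp, int_zpow_inv_one_sub hε0 hε1]
    ring
  rw [hInt, hLHS]
  have h2πI : (2 * (Real.pi : ℂ) * Complex.I) ≠ 0 := Complex.two_pi_I_ne_zero
  field_simp
end

section
/- Let ρ > 1 be a real number, let N ∈ ℕ, and let a : ℤ → ℂ satisfy a(n) = 0 for all n < −N. Let f : ℂ → ℂ be such that for every X ∈ ℂ with 0 < |X| < ρ the series ∑_{n ∈ ℤ} a(n)·Xⁿ converges (HasSum) to f(X). Define f₊(X) := ∑_{n ∈ ℕ} a(n)·Xⁿ. Then for every X with 0 < |X| < ρ: (i) for every r with 1 < r < ρ/|X| one has f₊(X) = (2πi)⁻¹ · ∮_{|z|=r} f(X·z)/(z−1) dz; and (ii) f₊(X) = f(X) + (2πi)⁻¹ · ∮_{|z|=1} (f(X·z) − f(X))/(z−1) dz. -/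
open Complex Metric Set Filter Topology

lemma aux_cont {r : ℝ} (hr : 1 < r) (n : ℤ) :
    ContinuousOn (fun z : ℂ => z ^ n / (z - 1)) (sphere (0:ℂ) r) := by
  intro z hz
  have hz' : ‖z‖ = r := by simpa using hz
  have h0 : z ≠ 0 := by
    intro h; rw [h] at hz'; simp at hz'; linarith
  have h1 : z ≠ 1 := by
    intro h; rw [h] at hz'; simp at hz'; linarith
  exact ((continuousAt_zpow₀ z n (Or.inl h0)).div
    (continuousAt_id.sub continuousAt_const) (sub_ne_zero.2 h1)).continuousWithinAt

lemma aux_I {r : ℝ} (hr : 1 < r) (n : ℤ) :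
    (∮ z in C((0:ℂ), r), z ^ n / (z - 1))
      = if 0 ≤ n then 2 * Real.pi * Complex.I else 0 := by
  have hr0 : (0:ℝ) < r := lt_trans one_pos hr
  have hint : ∀ m : ℤ, CircleIntegrable (fun z : ℂ => z ^ m / (z - 1)) 0 r :=
    fun m => (aux_cont hr m).circleIntegrable hr0.le
  -- step relation
  have step : ∀ m : ℤ, (∮ z in C((0:ℂ), r), z ^ m / (z - 1))
      - (∮ z in C((0:ℂ), r), z ^ (m-1) / (z - 1))
      = (if m = 0 then 2 * Real.pi * Complex.I else 0) := by
    intro m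
    rw [← circleIntegral.integral_sub (hint m) (hint (m-1))]
    have : (∮ z in C((0:ℂ), r), (z ^ m / (z - 1) - z ^ (m-1) / (z - 1)))
        = ∮ z in C((0:ℂ), r), (z - 0) ^ (m - 1) := by
      refine circleIntegral.integral_congr hr0.le (fun z hz => ?_)
      have hz' : ‖z‖ = r := by simpa using hz
      have h0 : z ≠ 0 := by intro h; rw [h] at hz'; simp at hz'; linarith
      have h1 : (z:ℂ) - 1 ≠ 0 := by
        intro h; rw [sub_eq_zero] at h; rw [h] at hz'; simp at hz'; linarith
      rw [sub_zero]
      rw [div_sub_div_same, div_eq_iff h1, mul_sub, mul_one, ← zpow_add_one₀ h0,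
        sub_add_cancel]
    rw [this]
    rcases eq_or_ne m 0 with rfl | hm
    · simp only [if_pos rfl]
      have := circleIntegral.integral_sub_inv_of_mem_ball
        (c := (0:ℂ)) (w := 0) (R := r) (by simpa using hr0)
      simpa using this
    · rw [if_neg hm, circleIntegral.integral_sub_zpow_of_ne]
      omega
  have Ineg : (∮ z in C((0:ℂ), r), z ^ (-1:ℤ) / (z - 1)) = 0 := by
    have h1r : (1:ℂ) ∈ ball (0:ℂ) r := by simpa using hr
    have h0r : (0:ℂ) ∈ ball (0:ℂ) r := by simpa using hr0
    have e1 := circleIntegral.integral_sub_inv_of_mem_ball h1r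
    have e0 := circleIntegral.integral_sub_inv_of_mem_ball h0r
    have hint1 : CircleIntegrable (fun z : ℂ => (z - 1)⁻¹) 0 r := by
      refine ContinuousOn.circleIntegrable hr0.le (fun z hz => ?_)
      have hz' : ‖z‖ = r := by simpa using hz
      have h1 : (z:ℂ) - 1 ≠ 0 := by
        intro h; rw [sub_eq_zero] at h; rw [h] at hz'; simp at hz'; linarith
      exact ((continuousAt_id.sub continuousAt_const).inv₀ h1).continuousWithinAt
    have hint0 : CircleIntegrable (fun z : ℂ => (z - 0)⁻¹) 0 r := by
      refine ContinuousOn.circleIntegrable hr0.le (fun z hz => ?_)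
      have hz' : ‖z‖ = r := by simpa using hz
      have h0 : (z:ℂ) - 0 ≠ 0 := by
        intro h; rw [sub_eq_zero] at h; rw [h] at hz'; simp at hz'; linarith
      exact ((continuousAt_id.sub continuousAt_const).inv₀ h0).continuousWithinAt
    have heq : (∮ z in C((0:ℂ), r), z ^ (-1:ℤ) / (z - 1))
        = ∮ z in C((0:ℂ), r), ((z-1)⁻¹ - (z-0)⁻¹) := by
      refine circleIntegral.integral_congr hr0.le fun z hz => ?_
      have hz' : ‖z‖ = r := by simpa using hz
      have h0 : z ≠ 0 := by intro h; rw [h] at hz'; simp at hz'; linarith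
      have h1 : (z:ℂ) - 1 ≠ 0 := by
        intro h; rw [sub_eq_zero] at h; rw [h] at hz'; simp at hz'; linarith
      rw [zpow_neg_one, sub_zero]
      field_simp
      ring
    rw [heq, circleIntegral.integral_sub hint1 hint0, e1, e0, sub_self]
  -- base case m = 0
  have base : (∮ z in C((0:ℂ), r), z ^ (0:ℤ) / (z - 1)) = 2 * Real.pi * Complex.I := by
    have h1r : (1:ℂ) ∈ ball (0:ℂ) r := by simpa using hr
    have := circleIntegral.integral_sub_inv_of_mem_ball h1r
    rw [← this]
    refine circleIntegral.integral_congr hr0.le (fun z hz => ?_)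
    simp [zpow_zero, one_div]
  induction n using Int.induction_on with
  | zero => rw [base, if_pos le_rfl]
  | succ k ih =>
    have h := step (k+1)
    rw [show ((k:ℤ)+1-1) = k by ring] at h
    rw [if_neg (by omega)] at h
    rw [sub_eq_zero] at h
    rw [h, ih, if_pos (by omega), if_pos (by omega)]
  | pred k ih =>
    rcases eq_or_ne (k:ℤ) 0 with hk | hk
    · rw [show (-(k:ℤ) - 1) = -1 by omega, if_neg (by norm_num), Ineg]
    · have h := step (-k)
      rw [if_neg (by simpa using hk), sub_eq_zero] at h
      rw [← h, ih, if_neg (by omega), if_neg (by omega)]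

lemma aux_zpow_int (m : ℤ) : CircleIntegrable (fun z : ℂ => z ^ m) 0 1 := by
  refine ContinuousOn.circleIntegrable zero_le_one (fun z hz => ?_)
  have hz' : ‖z‖ = 1 := by simpa using hz
  have h0 : z ≠ 0 := by intro h; rw [h] at hz'; simp at hz'
  exact (continuousAt_zpow₀ z m (Or.inl h0)).continuousWithinAt

lemma aux_zpow_val (m : ℤ) : (∮ z in C((0:ℂ), 1), z ^ m)
    = if m = -1 then 2 * Real.pi * Complex.I else 0 := by
  rcases eq_or_ne m (-1) with rfl | hm
  · rw [if_pos rfl]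
    have e0 := circleIntegral.integral_sub_inv_of_mem_ball
      (show (0:ℂ) ∈ ball (0:ℂ) 1 by simp)
    simp only [sub_zero] at e0
    simpa only [zpow_neg_one] using e0
  · rw [if_neg hm]
    have h := circleIntegral.integral_sub_zpow_of_ne hm (0:ℂ) (0:ℂ) 1
    simpa only [sub_zero] using h

lemma aux_ae0 {R : ℝ} (hR : R ≠ 0) {f g : ℂ → ℂ}
    (h : ∀ z ∈ sphere (0:ℂ) |R|, z ≠ 1 → f z = g z) :
    (fun θ : ℝ => f (circleMap 0 R θ))
      =ᵐ[MeasureTheory.volume] fun θ : ℝ => g (circleMap 0 R θ) := by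
  have hc : (circleMap 0 R ⁻¹' {1}).Countable :=
    (Set.countable_singleton _).preimage_circleMap 0 hR
  refine (hc.ae_notMem _).mono fun θ hθ => ?_
  have h1 : circleMap 0 R θ ≠ 1 := hθ
  exact h _ (circleMap_mem_sphere' _ _ _) h1

lemma circleIntegrable_congr_ae1 {f g : ℂ → ℂ}
    (h : ∀ z ∈ sphere (0:ℂ) 1, z ≠ 1 → f z = g z)
    (hf : CircleIntegrable f 0 1) : CircleIntegrable g 0 1 := by
  have hae := aux_ae0 (one_ne_zero : (1:ℝ) ≠ 0) (f := f) (g := g) (by simpa using h)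
  exact IntervalIntegrable.congr_ae hf (MeasureTheory.ae_restrict_of_ae hae)

lemma circleIntegral_congr_ae1 {f g : ℂ → ℂ}
    (h : ∀ z ∈ sphere (0:ℂ) 1, z ≠ 1 → f z = g z) :
    (∮ z in C((0:ℂ), 1), f z) = ∮ z in C((0:ℂ), 1), g z := by
  have hae := aux_ae0 (one_ne_zero : (1:ℝ) ≠ 0) (f := f) (g := g) (by simpa using h)
  refine intervalIntegral.integral_congr_ae (hae.mono fun θ hθ _ => ?_)
  simp only [hθ]

lemma circleIntegrable_fun_add {f g : ℂ → ℂ} {c : ℂ} {R : ℝ}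
    (hf : CircleIntegrable f c R) (hg : CircleIntegrable g c R) :
    CircleIntegrable (fun z => f z + g z) c R := by
  have h1 : IntervalIntegrable (fun θ => f (circleMap c R θ))
      MeasureTheory.volume 0 (2*Real.pi) := hf
  have h2 : IntervalIntegrable (fun θ => g (circleMap c R θ))
      MeasureTheory.volume 0 (2*Real.pi) := hg
  exact h1.add h2

lemma circleIntegrable_fun_sub {f g : ℂ → ℂ} {c : ℂ} {R : ℝ}
    (hf : CircleIntegrable f c R) (hg : CircleIntegrable g c R) :
    CircleIntegrable (fun z => f z - g z) c R := by
  have h1 : IntervalIntegrable (fun θ => f (circleMap c R θ))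
      MeasureTheory.volume 0 (2*Real.pi) := hf
  have h2 : IntervalIntegrable (fun θ => g (circleMap c R θ))
      MeasureTheory.volume 0 (2*Real.pi) := hg
  exact h1.sub h2

lemma aux_J (n : ℤ) :
    CircleIntegrable (fun z : ℂ => (z ^ n - 1) / (z - 1)) 0 1 ∧
    (∮ z in C((0:ℂ), 1), (z ^ n - 1) / (z - 1))
      = if 0 ≤ n then 0 else -(2 * Real.pi * Complex.I) := by
  have hrel : ∀ m : ℤ, ∀ z ∈ sphere (0:ℂ) 1, z ≠ 1 →
      (z ^ m - 1) / (z - 1) = (z ^ (m-1) - 1) / (z - 1) + z ^ (m-1) := by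
    intro m z hz hz1
    have hz' : ‖z‖ = 1 := by simpa using hz
    have h0 : z ≠ 0 := by intro h; rw [h] at hz'; simp at hz'
    have h1 : z - 1 ≠ 0 := sub_ne_zero.2 hz1
    have hzm : z ^ m = z ^ (m-1) * z := by rw [← zpow_add_one₀ h0, sub_add_cancel]
    rw [hzm]
    field_simp
    ring
  have hzero : CircleIntegrable (fun z : ℂ => (z ^ (0:ℤ) - 1) / (z - 1)) 0 1 := by
    have : (fun z : ℂ => (z ^ (0:ℤ) - 1) / (z - 1)) = fun _ => (0:ℂ) := by
      funext z; simp
    rw [this]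
    exact circleIntegrable_const 0 0 1
  have hint : ∀ m : ℤ, CircleIntegrable (fun z : ℂ => (z ^ m - 1) / (z - 1)) 0 1 := by
    intro m
    induction m using Int.induction_on with
    | zero => exact hzero
    | succ k ih =>
      refine circleIntegrable_congr_ae1 (f := fun z => (z ^ (k:ℤ) - 1)/(z-1) + z ^ (k:ℤ))
        (fun z hz hz1 => ?_) (circleIntegrable_fun_add ih (aux_zpow_int k))
      rw [hrel (k+1) z hz hz1, add_sub_cancel_right]
    | pred k ih =>
      refine circleIntegrable_congr_ae1 (f := fun z => (z ^ (-k:ℤ) - 1)/(z-1) - z ^ (-(k:ℤ)-1))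
        (fun z hz hz1 => ?_) (circleIntegrable_fun_sub ih (aux_zpow_int (-(k:ℤ)-1)))
      rw [hrel (-k) z hz hz1]
      ring
  have hstep : ∀ m : ℤ, (∮ z in C((0:ℂ), 1), (z ^ m - 1) / (z - 1))
      - (∮ z in C((0:ℂ), 1), (z ^ (m-1) - 1) / (z - 1))
        = (if m - 1 = -1 then 2 * Real.pi * Complex.I else 0) := by
    intro m
    rw [← circleIntegral.integral_sub (hint m) (hint (m-1)), ← aux_zpow_val (m-1)]
    refine circleIntegral_congr_ae1 (fun z hz hz1 => ?_)
    show (z ^ m - 1) / (z - 1) - (z ^ (m-1) - 1) / (z - 1) = z ^ (m-1)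
    rw [hrel m z hz hz1]
    ring
  have hbase : (∮ z in C((0:ℂ), 1), (z ^ (0:ℤ) - 1) / (z - 1)) = 0 := by
    have : (fun z : ℂ => (z ^ (0:ℤ) - 1) / (z - 1)) = fun _ => (0:ℂ) := by
     funext z; simp
    rw [this]
    simp [circleIntegral]
  refine ⟨hint n, ?_⟩
  induction n using Int.induction_on with
  | zero => rw [hbase, if_pos le_rfl]
  | succ k ih =>
    have h := hstep (k+1)
    rw [show ((k:ℤ)+1-1) = (k:ℤ) by ring, if_neg (by omega), sub_eq_zero] at h
    rw [h, ih, if_pos (by omega), if_pos (by omega)]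
  | pred k ih =>
    rcases eq_or_ne (k:ℤ) 0 with hk | hk
    · have h := hstep 0
      rw [if_pos (by norm_num), hbase, zero_sub] at h
      rw [show (-(k:ℤ) - 1) = (0:ℤ)-1 by omega, if_neg (by omega)]
      linear_combination -h
    · have h := hstep (-k)
      rw [if_neg (by omega), sub_eq_zero] at h
      rw [← h, ih, if_neg (by omega), if_neg (by omega)]

lemma aux_summable {ρ : ℝ} {a : ℤ → ℂ} {N : ℕ}
    (ha : ∀ n : ℤ, n < -(N:ℤ) → a n = 0)
    (hsum : ∀ u : ℝ, 0 < u → u < ρ → Summable (fun n : ℤ => a n * (u:ℂ) ^ n))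
    {t : ℝ} (ht0 : 0 < t) (htρ : t < ρ) :
    Summable (fun n : ℤ => ‖a n‖ * ((n.natAbs : ℝ) + 1) * t ^ n) := by
  obtain ⟨u, hu1, hu2⟩ : ∃ u, t < u ∧ u < ρ := ⟨(t+ρ)/2, by constructor <;> linarith⟩
  have hu0 : 0 < u := lt_trans ht0 hu1
  have h1 := hsum u hu0 hu2
  have h2 : Filter.Tendsto (fun n : ℕ => a n * (u:ℂ) ^ (n:ℤ)) Filter.cofinite (𝓝 0) :=
    (h1.tendsto_cofinite_zero).comp (Function.Injective.tendsto_cofinite (Nat.cast_injective : Function.Injective ((↑) : ℕ → ℤ)))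
  have h3 : ∀ᶠ n : ℕ in Filter.cofinite, ‖a n * (u:ℂ)^(n:ℤ)‖ < 1 :=
    (NormedAddCommGroup.tendsto_nhds_zero.mp h2) 1 one_pos
  have hq0 : 0 ≤ t / u := by positivity
  have hq1 : t / u < 1 := (div_lt_one hu0).2 hu1
  have hgeom : Summable (fun n : ℕ => ((n:ℝ) + 1) * (t/u)^n) := by
    have g1 := summable_pow_mul_geometric_of_norm_lt_one (R := ℝ) 1
      (by rwa [Real.norm_eq_abs, _root_.abs_of_nonneg hq0])
    have g2 := summable_geometric_of_lt_one hq0 hq1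
    simpa [pow_one, add_mul, one_mul] using g1.add g2
  have hnat : Summable (fun n : ℕ => ‖a (n:ℤ)‖ * ((((n:ℤ)).natAbs : ℝ) + 1) * t ^ ((n:ℕ):ℤ)) := by
    refine Summable.of_norm_bounded_eventually hgeom ?_
    filter_upwards [h3] with n hn
    have hucast : ‖((u:ℝ):ℂ)‖ = u := by
      rw [Complex.norm_real, Real.norm_eq_abs, _root_.abs_of_pos hu0]
    rw [norm_mul, norm_zpow, hucast, zpow_natCast] at hn
    have hbound : ‖a (n:ℤ)‖ * u ^ n ≤ 1 := le_of_lt hn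
    have h4 : ‖a (n:ℤ)‖ * ((((n:ℤ)).natAbs : ℝ) + 1) * t ^ ((n:ℕ):ℤ)
        = (‖a (n:ℤ)‖ * u ^ n) * (((n:ℝ) + 1) * t ^ n / u ^ n) := by
      rw [zpow_natCast, Int.natAbs_natCast]
      field_simp
    rw [Real.norm_eq_abs, _root_.abs_of_nonneg (by positivity), h4]
    calc (‖a (n:ℤ)‖ * u ^ n) * (((n:ℝ) + 1) * t ^ n / u ^ n)
        ≤ 1 * (((n:ℝ) + 1) * t ^ n / u ^ n) := by
          apply mul_le_mul_of_nonneg_right hbound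
          positivity
      _ = ((n:ℝ) + 1) * (t/u)^n := by rw [div_pow]; ring
  have hneg : Summable (fun n : ℕ => ‖a (-(n:ℤ))‖ * (((-(n:ℤ)).natAbs : ℝ) + 1) * t ^ (-(n:ℤ))) := by
    apply summable_of_ne_finset_zero (s := Finset.range (N+1))
    intro n hn
    have h0 : a (-(n:ℤ)) = 0 := ha _ (by simp only [Finset.mem_range, not_lt] at hn; omega)
    simp [h0]
  exact Summable.of_nat_of_neg hnat hneg

lemma aux_bound_nat {z : ℂ} (hz : ‖z‖ = 1) (m : ℕ) :
    ‖(z ^ (m:ℤ) - 1)/(z - 1)‖ ≤ (m : ℝ) := by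
  rcases eq_or_ne z 1 with rfl | hz1
  · simp
  · have h1 : z - 1 ≠ 0 := sub_ne_zero.2 hz1
    rw [zpow_natCast, ← geom_sum_mul, mul_div_assoc, div_self h1, mul_one]
    calc ‖∑ i ∈ Finset.range m, z ^ i‖ ≤ ∑ i ∈ Finset.range m, ‖z ^ i‖ :=
          norm_sum_le _ _
      _ = ∑ i ∈ Finset.range m, 1 := by
          refine Finset.sum_congr rfl fun i _ => ?_
          rw [norm_pow, hz, one_pow]
      _ = (m : ℝ) := by simp

lemma aux_bound {z : ℂ} (hz : ‖z‖ = 1) (n : ℤ) :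
    ‖(z ^ n - 1)/(z - 1)‖ ≤ (n.natAbs : ℝ) := by
  have h0 : z ≠ 0 := by intro h; rw [h] at hz; simp at hz
  rcases Int.natAbs_eq n with he | he
  · conv_lhs => rw [he]
    exact aux_bound_nat hz n.natAbs
  · rw [he]
    set m := n.natAbs
    have hmm : z ^ (-(m:ℤ)) * z ^ (m:ℤ) = 1 := by
      rw [← zpow_add₀ h0]; simp
    have e : z ^ (-(m:ℤ)) - 1 = -(z ^ (-(m:ℤ))) * (z ^ (m:ℤ) - 1) := by
      linear_combination hmm
    rw [e, neg_mul, neg_div, norm_neg, mul_div_assoc, norm_mul, norm_zpow, hz]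
    simpa using aux_bound_nat hz m

lemma circleIntegrable_const_mul {f : ℂ → ℂ} {c : ℂ} {R : ℝ} (w : ℂ)
    (hf : CircleIntegrable f c R) : CircleIntegrable (fun z => w * f z) c R := by
  have h1 : IntervalIntegrable (fun θ => f (circleMap c R θ))
      MeasureTheory.volume 0 (2*Real.pi) := hf
  exact h1.const_mul w

lemma circleIntegral_const_mul (w : ℂ) (f : ℂ → ℂ) (c : ℂ) (R : ℝ) :
    (∮ z in C(c, R), w * f z) = w * ∮ z in C(c, R), f z := by
  simpa only [smul_eq_mul] using circleIntegral.integral_smul (𝕜 := ℂ) w f c R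

lemma aux_interchange {r : ℝ} (hr : 0 < r) (F : ℤ → ℂ → ℂ) (g : ℂ → ℂ) (c : ℤ → ℝ)
    (hFc : ∀ n, CircleIntegrable (F n) 0 r)
    (hFg : ∀ z ∈ sphere (0:ℂ) r, HasSum (fun n => F n z) (g z))
    (hc : Summable c)
    (hbound : ∀ (n : ℤ), ∀ z ∈ sphere (0:ℂ) r, ‖F n z‖ ≤ c n) :
    HasSum (fun n => ∮ z in C((0:ℂ), r), F n z) (∮ z in C((0:ℂ), r), g z) := by
  have h2π : (0:ℝ) ≤ 2 * Real.pi := by positivity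
  set μ := MeasureTheory.volume.restrict (Set.Ioc (0:ℝ) (2*Real.pi)) with hμ
  have hμuniv : μ Set.univ = ENNReal.ofReal (2*Real.pi) := by
    rw [hμ, MeasureTheory.Measure.restrict_apply_univ, Real.volume_Ioc, sub_zero]
  haveI : MeasureTheory.IsFiniteMeasure μ :=
    ⟨by rw [hμuniv]; exact ENNReal.ofReal_lt_top⟩
  have hG : ∀ (h : ℂ → ℂ), (∮ z in C((0:ℂ), r), h z)
      = ∫ θ, deriv (circleMap 0 r) θ • h (circleMap 0 r θ) ∂μ := by
    intro h
    rw [circleIntegral, intervalIntegral.integral_of_le h2π]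
  have hInt : ∀ n, MeasureTheory.Integrable
      (fun θ => deriv (circleMap 0 r) θ • F n (circleMap 0 r θ)) μ := by
    intro n
    have h := (hFc n).out
    rw [intervalIntegrable_iff_integrableOn_Ioc_of_le h2π] at h
    exact h
  have hnorm : ∀ n, (∫ θ, ‖deriv (circleMap 0 r) θ • F n (circleMap 0 r θ)‖ ∂μ)
      ≤ (r * c n) * (2*Real.pi) := by
    intro n
    have hb : ∀ᵐ θ ∂μ, ‖‖deriv (circleMap 0 r) θ • F n (circleMap 0 r θ)‖‖ ≤ r * c n := by
      refine MeasureTheory.ae_of_all _ fun θ => ?_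
      rw [norm_norm, norm_smul, deriv_circleMap]
      have hd : ‖circleMap 0 r θ * Complex.I‖ = r := by
        rw [norm_mul, Complex.norm_I, mul_one, norm_circleMap_zero,
          _root_.abs_of_pos hr]
      rw [hd]
      exact mul_le_mul_of_nonneg_left
        (hbound n _ (circleMap_mem_sphere 0 hr.le θ)) hr.le
    have h5 := MeasureTheory.norm_integral_le_of_norm_le_const hb
    rw [MeasureTheory.measureReal_def, hμuniv, ENNReal.toReal_ofReal h2π] at h5
    exact le_trans (le_abs_self _) (by rwa [Real.norm_eq_abs] at h5)
  have hsum2 : Summable (fun n =>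
      ∫ θ, ‖deriv (circleMap 0 r) θ • F n (circleMap 0 r θ)‖ ∂μ) := by
    refine Summable.of_nonneg_of_le
      (fun n => MeasureTheory.integral_nonneg (fun θ => norm_nonneg _)) hnorm ?_
    exact (hc.mul_left r).mul_right (2*Real.pi)
  have key := MeasureTheory.hasSum_integral_of_summable_integral_norm hInt hsum2
  have hptw : ∀ θ : ℝ, (∑' n : ℤ, deriv (circleMap 0 r) θ • F n (circleMap 0 r θ))
      = deriv (circleMap 0 r) θ • g (circleMap 0 r θ) := fun θ =>
    (HasSum.const_smul _ (hFg _ (circleMap_mem_sphere 0 hr.le θ))).tsum_eq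
  rw [MeasureTheory.integral_congr_ae (MeasureTheory.ae_of_all _ hptw)] at key
  rw [hG g]
  have e : (fun n => ∮ z in C((0:ℂ), r), F n z)
      = fun n => ∫ θ, deriv (circleMap 0 r) θ • F n (circleMap 0 r θ) ∂μ :=
    funext fun n => hG (F n)
  rw [e]
  exact key

set_option maxHeartbeats 1000000

/-- Truncation of a Laurent series to its nonnegative part via circle integrals:
for `0 < |X| < ρ`, (i) `f₊(X) = (2πi)⁻¹ ∮_{|z|=r} f(Xz)/(z−1) dz` for any
`1 < r < ρ/|X|`, and (ii) `f₊(X) = f(X) + (2πi)⁻¹ ∮_{|z|=1} (f(Xz)−f(X))/(z−1) dz`. -/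
theorem laurent_truncation_circle
    (ρ : ℝ) (hρ : 1 < ρ) (N : ℕ) (a : ℤ → ℂ)
    (ha : ∀ n : ℤ, n < -(N : ℤ) → a n = 0)
    (f : ℂ → ℂ)
    (hf : ∀ X : ℂ, 0 < ‖X‖ → ‖X‖ < ρ → HasSum (fun n : ℤ => a n * X ^ n) (f X))
    (X : ℂ) (hX0 : 0 < ‖X‖) (hXρ : ‖X‖ < ρ) :
    (∀ r : ℝ, 1 < r → r < ρ / ‖X‖ →
        (∑' n : ℕ, a (n : ℤ) * X ^ n)
          = (2 * (Real.pi : ℂ) * Complex.I)⁻¹ *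
              ∮ z in C(0, r), f (X * z) / (z - 1)) ∧
    (∑' n : ℕ, a (n : ℤ) * X ^ n)
      = f X + (2 * (Real.pi : ℂ) * Complex.I)⁻¹ *
          ∮ z in C(0, 1), (f (X * z) - f X) / (z - 1) := by
  have hsum : ∀ u : ℝ, 0 < u → u < ρ → Summable (fun n : ℤ => a n * (u:ℂ) ^ n) := by
    intro u h0 h1
    have hn : ‖((u:ℝ):ℂ)‖ = u := by
      rw [Complex.norm_real, Real.norm_eq_abs, _root_.abs_of_pos h0]
    exact (hf u (by rw [hn]; exact h0) (by rw [hn]; exact h1)).summable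
  have habs : Summable (fun n : ℤ => ‖a n * X ^ n‖) := by
    refine Summable.of_nonneg_of_le (fun n => norm_nonneg _) ?_
      (aux_summable ha hsum hX0 hXρ)
    intro n
    rw [norm_mul, norm_zpow]
    have h1 : (0:ℝ) < ‖X‖ ^ n := zpow_pos hX0 n
    nlinarith [norm_nonneg (a n),
      mul_nonneg (mul_nonneg (norm_nonneg (a n)) (Nat.cast_nonneg (α := ℝ) n.natAbs)) h1.le]
  have hSz : Summable (fun n : ℤ => a n * X ^ n) := habs.of_norm
  have hSnat' : Summable (fun n : ℕ => a (n:ℤ) * X ^ n) := by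
    refine (hSz.comp_injective Nat.cast_injective).congr fun n => ?_
    simp only [Function.comp_apply, zpow_natCast]
  set S := ∑' n : ℕ, a (n:ℤ) * X ^ n with hS
  have hSsum : HasSum (fun n : ℕ => a (n:ℤ) * X ^ (n:ℤ)) S := by
    have he : (fun n : ℕ => a (n:ℤ) * X ^ (n:ℤ)) = fun n : ℕ => a (n:ℤ) * X ^ n :=
      funext fun n => by rw [zpow_natCast]
    rw [he, hS]
    exact hSnat'.hasSum
  have hinj : Function.Injective (fun k : ℕ => (-(k+1) : ℤ)) := fun x y h => by
    simp only at h; omega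
  have hTsum : Summable (fun k : ℕ => a (-(k+1):ℤ) * X ^ (-(k+1):ℤ)) :=
    (hSz.comp_injective hinj).congr fun k => rfl
  set T := ∑' k : ℕ, a (-(k+1):ℤ) * X ^ (-(k+1):ℤ) with hT
  have hTs : HasSum (fun k : ℕ => a (-(k+1):ℤ) * X ^ (-(k+1):ℤ)) T := hTsum.hasSum
  have hfXST : f X = S + T :=
    (hf X hX0 hXρ).unique (HasSum.of_nat_of_neg_add_one (f := fun n : ℤ => a n * X ^ n) hSsum hTs)
  constructor
  · intro r hr1 hr2
    have hr0 : (0:ℝ) < r := lt_trans one_pos hr1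
    have hXr : 0 < ‖X‖ * r := by positivity
    have hXrρ : ‖X‖ * r < ρ := by
      have := (lt_div_iff₀ hX0).mp hr2
      linarith [this]
    obtain ⟨F, hF⟩ : ∃ F : ℤ → ℂ → ℂ,
        ∀ n, F n = fun z => (a n * X ^ n) * (z ^ n / (z - 1)) := ⟨_, fun n => rfl⟩
    have hFc : ∀ n, CircleIntegrable (F n) 0 r := fun n => by
      rw [hF n]
      exact circleIntegrable_const_mul _ ((aux_cont hr1 n).circleIntegrable hr0.le)
    have hFg : ∀ z ∈ sphere (0:ℂ) r, HasSum (fun n => F n z) (f (X*z) / (z-1)) := by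
      intro z hz
      have hz' : ‖z‖ = r := by simpa using hz
      have hXz : ‖X * z‖ = ‖X‖ * r := by rw [norm_mul, hz']
      have h1 := hf (X*z) (by rw [hXz]; exact hXr) (by rw [hXz]; exact hXrρ)
      have h2 := h1.div_const (z - 1)
      have he : (fun n : ℤ => a n * (X*z)^n / (z-1)) = fun n => F n z :=
        funext fun n => by rw [hF n]; simp only; rw [mul_zpow]; ring
      rw [← he]
      exact h2
    have hc : Summable (fun n : ℤ =>
        (‖a n‖ * ((n.natAbs:ℝ)+1) * (‖X‖*r)^n) * (r-1)⁻¹) :=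
      (aux_summable ha hsum hXr hXrρ).mul_right _
    have hbound : ∀ (n : ℤ), ∀ z ∈ sphere (0:ℂ) r,
        ‖F n z‖ ≤ (‖a n‖ * ((n.natAbs:ℝ)+1) * (‖X‖*r)^n) * (r-1)⁻¹ := by
      intro n z hz
      have hz' : ‖z‖ = r := by simpa using hz
      have hz1 : r - 1 ≤ ‖z - 1‖ := by
        calc r - 1 = ‖z‖ - ‖(1:ℂ)‖ := by rw [hz']; simp
          _ ≤ ‖z - 1‖ := norm_sub_norm_le _ _
      have hr1' : (0:ℝ) < r - 1 := by linarith
      have e1 : ‖F n z‖ = (‖a n‖ * ‖X‖^n) * (r^n / ‖z - 1‖) := by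
        rw [hF n]; simp only
        rw [norm_mul, norm_mul, norm_div, norm_zpow, norm_zpow, hz']
      rw [e1]
      have e2 : (‖X‖*r)^n = ‖X‖^n * r^n := mul_zpow _ _ _
      rw [e2]
      have h3 : r^n / ‖z - 1‖ ≤ r^n * (r-1)⁻¹ := by
        rw [div_eq_mul_inv]
        exact mul_le_mul_of_nonneg_left (inv_anti₀ hr1' hz1) (zpow_pos hr0 n).le
      have h4 : (0:ℝ) ≤ (n.natAbs:ℝ) := Nat.cast_nonneg _
      have h5 : (0:ℝ) < ‖X‖^n := zpow_pos hX0 n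
      have h6 : (0:ℝ) < r^n := zpow_pos hr0 n
      have h7 : (0:ℝ) ≤ (r-1)⁻¹ := by positivity
      calc (‖a n‖ * ‖X‖^n) * (r^n / ‖z - 1‖)
          ≤ (‖a n‖ * ‖X‖^n) * (r^n * (r-1)⁻¹) := by
            apply mul_le_mul_of_nonneg_left h3
            positivity
        _ ≤ (‖a n‖ * ((n.natAbs:ℝ)+1) * (‖X‖^n * r^n)) * (r-1)⁻¹ := by
            nlinarith [norm_nonneg (a n),
              mul_nonneg (mul_nonneg (mul_nonneg (mul_nonneg (norm_nonneg (a n)) h4)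
                h5.le) h6.le) h7]
    have hint := aux_interchange hr0 F _ _ hFc hFg hc hbound
    have hFval : (fun n : ℤ => ∮ z in C((0:ℂ), r), F n z)
        = fun n : ℤ => a n * X ^ n * (if 0 ≤ n then 2*Real.pi*Complex.I else 0) := by
      funext n
      rw [show (∮ z in C((0:ℂ), r), F n z) = ∮ z in C((0:ℂ), r),
          (a n * X ^ n) * (z ^ n / (z - 1)) by rw [hF n]]
      rw [circleIntegral_const_mul, aux_I hr1 n]
    rw [hFval] at hint
    have h7 : HasSum (fun n : ℤ => a n * X ^ n *
        (if 0 ≤ n then 2*Real.pi*Complex.I else 0)) (S * (2*Real.pi*Complex.I) + 0) := by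
      have hnat : HasSum (fun k : ℕ => a (k:ℤ) * X ^ (k:ℤ) *
          (if 0 ≤ ((k:ℕ):ℤ) then 2*Real.pi*Complex.I else 0))
          (S * (2*Real.pi*Complex.I)) := by
        have he : (fun k : ℕ => a (k:ℤ) * X ^ (k:ℤ) *
            (if 0 ≤ ((k:ℕ):ℤ) then 2*Real.pi*Complex.I else 0))
            = fun k : ℕ => a (k:ℤ) * X ^ (k:ℤ) * (2*Real.pi*Complex.I) :=
          funext fun k => by rw [if_pos (Int.natCast_nonneg k)]
        rw [he]
        exact hSsum.mul_right _
      have hneg : HasSum (fun k : ℕ => a (-(k+1):ℤ) * X ^ (-(k+1):ℤ) *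
          (if 0 ≤ (-(k+1):ℤ) then 2*Real.pi*Complex.I else 0)) 0 := by
        have he : (fun k : ℕ => a (-(k+1):ℤ) * X ^ (-(k+1):ℤ) *
            (if 0 ≤ (-(k+1):ℤ) then 2*Real.pi*Complex.I else 0)) = fun _ => 0 :=
          funext fun k => by rw [if_neg (by omega), mul_zero]
        rw [he]
        exact hasSum_zero
      exact HasSum.of_nat_of_neg_add_one (f := fun n : ℤ => a n * X ^ n * (if 0 ≤ n then 2*Real.pi*Complex.I else 0)) hnat hneg
    have hval : (∮ z in C((0:ℂ), r), f (X*z) / (z-1)) = S * (2*Real.pi*Complex.I) + 0 :=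
      hint.unique h7
    rw [hval, add_zero, mul_comm S, ← mul_assoc, inv_mul_cancel₀ Complex.two_pi_I_ne_zero,
      one_mul]
  · obtain ⟨F, hF⟩ : ∃ F : ℤ → ℂ → ℂ,
        ∀ n, F n = fun z => (a n * X ^ n) * ((z ^ n - 1) / (z - 1)) := ⟨_, fun n => rfl⟩
    have hFc : ∀ n, CircleIntegrable (F n) 0 1 := fun n => by
      rw [hF n]
      exact circleIntegrable_const_mul _ (aux_J n).1
    have hFg : ∀ z ∈ sphere (0:ℂ) 1,
        HasSum (fun n => F n z) ((f (X*z) - f X) / (z-1)) := by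
      intro z hz
      have hz' : ‖z‖ = 1 := by simpa using hz
      rcases eq_or_ne z 1 with rfl | hz1
      · have he : (fun n : ℤ => F n 1) = fun _ => 0 := funext fun n => by
          rw [hF n]; simp
        have hval : (f (X*1) - f X) / ((1:ℂ)-1) = 0 := by
          rw [mul_one, sub_self, zero_div]
        rw [he, hval]
        exact hasSum_zero
      · have hXz : ‖X * z‖ = ‖X‖ := by rw [norm_mul, hz', mul_one]
        have h1 := hf (X*z) (by rw [hXz]; exact hX0) (by rw [hXz]; exact hXρ)
        have h2 := (h1.sub (hf X hX0 hXρ)).div_const (z - 1)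
        have he : (fun n : ℤ => (a n * (X*z)^n - a n * X^n) / (z-1)) = fun n => F n z :=
          funext fun n => by rw [hF n]; simp only; rw [mul_zpow]; ring
        rw [← he]
        exact h2
    have hc : Summable (fun n : ℤ => ‖a n‖ * ((n.natAbs:ℝ)+1) * ‖X‖^n) :=
      aux_summable ha hsum hX0 hXρ
    have hbound : ∀ (n : ℤ), ∀ z ∈ sphere (0:ℂ) 1,
        ‖F n z‖ ≤ ‖a n‖ * ((n.natAbs:ℝ)+1) * ‖X‖^n := by
      intro n z hz
      have hz' : ‖z‖ = 1 := by simpa using hz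
      have e1 : ‖F n z‖ = (‖a n‖ * ‖X‖^n) * ‖(z^n - 1)/(z-1)‖ := by
        rw [hF n]; simp only
        rw [norm_mul, norm_mul, norm_zpow]
      rw [e1]
      have h3 := aux_bound hz' n
      have h5 : (0:ℝ) < ‖X‖^n := zpow_pos hX0 n
      nlinarith [norm_nonneg (a n), norm_nonneg ((z^n - 1)/(z-1)),
        mul_nonneg (norm_nonneg (a n)) h5.le]
    have hint := aux_interchange one_pos F _ _ hFc hFg hc hbound
    have hFval : (fun n : ℤ => ∮ z in C((0:ℂ), 1), F n z)
        = fun n : ℤ => a n * X ^ n * (if 0 ≤ n then 0 else -(2*Real.pi*Complex.I)) := by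
      funext n
      rw [show (∮ z in C((0:ℂ), 1), F n z) = ∮ z in C((0:ℂ), 1),
          (a n * X ^ n) * ((z ^ n - 1) / (z - 1)) by rw [hF n]]
      rw [circleIntegral_const_mul, (aux_J n).2]
    rw [hFval] at hint
    have h8 : HasSum (fun n : ℤ => a n * X ^ n *
        (if 0 ≤ n then 0 else -(2*Real.pi*Complex.I)))
        (0 + T * (-(2*Real.pi*Complex.I))) := by
      have hnat : HasSum (fun k : ℕ => a (k:ℤ) * X ^ (k:ℤ) *
          (if 0 ≤ ((k:ℕ):ℤ) then 0 else -(2*Real.pi*Complex.I))) 0 := by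
        have he : (fun k : ℕ => a (k:ℤ) * X ^ (k:ℤ) *
            (if 0 ≤ ((k:ℕ):ℤ) then 0 else -(2*Real.pi*Complex.I))) = fun _ => 0 :=
          funext fun k => by rw [if_pos (Int.natCast_nonneg k), mul_zero]
        rw [he]
        exact hasSum_zero
      have hneg : HasSum (fun k : ℕ => a (-(k+1):ℤ) * X ^ (-(k+1):ℤ) *
          (if 0 ≤ (-(k+1):ℤ) then 0 else -(2*Real.pi*Complex.I)))
          (T * (-(2*Real.pi*Complex.I))) := by
        have he : (fun k : ℕ => a (-(k+1):ℤ) * X ^ (-(k+1):ℤ) *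
            (if 0 ≤ (-(k+1):ℤ) then 0 else -(2*Real.pi*Complex.I)))
            = fun k : ℕ => a (-(k+1):ℤ) * X ^ (-(k+1):ℤ) * (-(2*Real.pi*Complex.I)) :=
          funext fun k => by rw [if_neg (by omega)]
        rw [he]
        exact hTs.mul_right _
      exact HasSum.of_nat_of_neg_add_one (f := fun n : ℤ => a n * X ^ n * (if 0 ≤ n then 0 else -(2*Real.pi*Complex.I))) hnat hneg
    have hval : (∮ z in C((0:ℂ), 1), (f (X*z) - f X) / (z-1))
        = 0 + T * (-(2*Real.pi*Complex.I)) := hint.unique h8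
    rw [hval, hfXST]
    have hne := Complex.two_pi_I_ne_zero
    field_simp
    ring
end

section
/- There exists an absolute constant C > 0 with the following property. Let ρ > 1 be a real number, N ∈ ℕ, and let a : ℤ → ℂ satisfy a(n) = 0 for all n < −N; assume that for every X ∈ ℂ with 0 < |X| < ρ the family n ↦ a(n)·Xⁿ (n ∈ ℤ) is absolutely summable. Then for every k ∈ ℕ and every X with 0 < |X| < ρ: |∑_{n ∈ ℕ} nᵏ·a(n)·Xⁿ| ≤ C·( |∑_{n ∈ ℤ} nᵏ·a(n)·Xⁿ| + sup_{|z|=1} |∑_{n ∈ ℤ} n^{k+1}·a(n)·(X·z)ⁿ| ). (Here the weighted series ∑_{n ∈ ℤ} nʲ·a(n)·Xⁿ converge absolutely on the open annulus; the sums are interpreted as tsums.) -/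
open MeasureTheory Real Set Filter
open scoped Topology

namespace LaurentTrunc


noncomputable def Hker (θ : ℝ) : ℝ :=
  π + Real.log (2 * π ^ 2) - Real.log θ - Real.log (2 * π - θ)

lemma integrableOn_neg_log_Ioc01 :
    IntegrableOn (fun x : ℝ => -Real.log x) (Ioc (0:ℝ) 1) := by
  refine intervalIntegral.integrableOn_deriv_of_nonneg
    (g := fun x : ℝ => x - x * Real.log x)
    ((continuous_id.sub Real.continuous_mul_log).continuousOn) ?_ ?_
  · intro x hx
    have h := (hasDerivAt_id' x).sub (Real.hasDerivAt_mul_log hx.1.ne')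
    exact h.congr_deriv (by ring)
  · intro x hx
    simpa using Real.log_nonpos hx.1.le hx.2.le

lemma integrableOn_log_Ioc : IntegrableOn Real.log (Ioc (0:ℝ) (2*π)) := by
  have hπ := Real.pi_gt_three
  have h1 : IntegrableOn Real.log (Ioc (0:ℝ) 1) := by
    have h := integrableOn_neg_log_Ioc01.neg
    exact h.congr (ae_of_all _ (fun x => by simp))
  have h2 : IntegrableOn Real.log (Icc (1:ℝ) (2*π)) :=
    ContinuousOn.integrableOn_compact isCompact_Icc
      (Real.continuousOn_log.mono (by
        intro x hx
        simp only [Set.mem_compl_iff, Set.mem_singleton_iff]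
        intro h; rw [h] at hx; exact absurd hx.1 (by norm_num)))
  refine (h1.union h2).mono_set ?_
  intro x hx
  rcases le_or_gt x 1 with h | h
  · exact Or.inl ⟨hx.1, h⟩
  · exact Or.inr ⟨h.le, hx.2⟩

lemma integrableOn_log_sub_Ioc :
    IntegrableOn (fun θ : ℝ => Real.log (2*π - θ)) (Ioc (0:ℝ) (2*π)) := by
  have hπ := Real.pi_gt_three
  have h2 : IntegrableOn (fun θ : ℝ => Real.log (2*π - θ)) (Icc (0:ℝ) (2*π-1)) := by
    refine ContinuousOn.integrableOn_compact isCompact_Icc ?_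
    refine Real.continuousOn_log.comp
      ((continuous_const.sub continuous_id).continuousOn) ?_
    intro x hx
    simp only [Set.mem_compl_iff, Set.mem_singleton_iff]
    intro h
    nlinarith [hx.2, h]
  have h1 : IntegrableOn (fun θ : ℝ => Real.log (2*π - θ)) (Ioc (2*π-1) (2*π)) := by
    have h := intervalIntegral.integrableOn_deriv_of_nonneg (a := 2*π-1) (b := 2*π)
      (g := fun θ : ℝ => (2*π - θ) * Real.log (2*π - θ) - (2*π - θ))
      (g' := fun θ : ℝ => -Real.log (2*π - θ))
      (((Real.continuous_mul_log.sub continuous_id).comp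
        (continuous_const.sub continuous_id)).continuousOn) ?_ ?_
    · exact h.neg.congr (ae_of_all _ (fun x => by simp))
    · intro x hx
      have hne : 2*π - x ≠ 0 := by simp only [Set.mem_Ioo] at hx; intro h; nlinarith [hx.2]
      have hφ : HasDerivAt (fun u : ℝ => u * Real.log u - u) (Real.log (2*π - x)) (2*π - x) := by
        have := (Real.hasDerivAt_mul_log hne).sub (hasDerivAt_id' (2*π - x))
        exact this.congr_deriv (by ring)
      have hin : HasDerivAt (fun θ : ℝ => 2*π - θ) (-1) x := by
        exact ((hasDerivAt_const x (2*π)).sub (hasDerivAt_id' x)).congr_deriv (by ring)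
      have := hφ.comp x hin
      exact this.congr_deriv (by ring)
    · intro x hx
      simp only [Set.mem_Ioo] at hx
      have h0 : Real.log (2*π - x) ≤ 0 := Real.log_nonpos (by nlinarith [hx.2]) (by nlinarith [hx.1])
      show (0:ℝ) ≤ -Real.log (2*π - x)
      linarith
  refine ((h2.union h1).mono_set ?_)
  intro x hx
  rcases le_or_gt x (2*π-1) with h | h
  · exact Or.inl ⟨hx.1.le, h⟩
  · exact Or.inr ⟨h, hx.2⟩

lemma integrableOn_Hker : IntegrableOn Hker (Ioc (0:ℝ) (2*π)) := by
  have hc : IntegrableOn (fun _ : ℝ => π + Real.log (2 * π ^ 2)) (Ioc (0:ℝ) (2*π)) :=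
    integrableOn_const measure_Ioc_lt_top.ne
  exact (hc.sub integrableOn_log_Ioc).sub integrableOn_log_sub_Ioc

lemma Hker_nonneg {θ : ℝ} (h1 : 0 < θ) (h2 : θ ≤ 2*π) : 0 ≤ Hker θ := by
  have hπ := Real.pi_gt_three
  have key : Real.log θ + Real.log (2*π - θ) ≤ Real.log (2 * π ^ 2) := by
    rcases eq_or_lt_of_le h2 with h | h
    · rw [← h]
      simp only [sub_self, Real.log_zero, add_zero]
      exact Real.log_le_log (by positivity) (by nlinarith)
    · rw [← Real.log_mul h1.ne' (by nlinarith)]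
      exact Real.log_le_log (by nlinarith) (by nlinarith)
  have : 0 < π := by linarith
  unfold Hker; linarith



lemma circle_orth (q : ℤ) :
    ∫ θ in Ioc (0:ℝ) (2*π), Complex.exp (θ * Complex.I) ^ q =
      if q = 0 then (2*π : ℂ) else 0 := by
  have h2π : (0:ℝ) ≤ 2*π := by positivity
  rcases eq_or_ne q 0 with rfl | hq
  · simp only [zpow_zero, if_true]
    rw [setIntegral_const]
    simp [Real.volume_Ioc, ENNReal.toReal_ofReal h2π, max_eq_left h2π]
  · simp only [hq, if_false]
    rw [← intervalIntegral.integral_of_le h2π]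
    have h0 : ∀ θ : ℝ, Complex.exp ((θ:ℂ) * Complex.I) ^ q
        = Complex.exp (((q:ℂ) * Complex.I) * (θ:ℂ)) := by
      intro θ
      rw [← Complex.exp_int_mul]
      ring_nf
    simp_rw [h0]
    rw [integral_exp_mul_complex (by simp [hq] : ((q:ℂ) * Complex.I) ≠ 0)]
    have h1 : (q:ℂ) * Complex.I * ((2*π : ℝ):ℂ) = (q:ℂ) * (2 * (π:ℂ) * Complex.I) := by
      push_cast; ring
    rw [h1, Complex.exp_int_mul_two_pi_mul_I]
    simp

set_option maxHeartbeats 1000000 in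
lemma kernel_bound {s θ : ℝ} (hs1 : 1/2 ≤ s) (hs2 : s < 1)
    (hθ1 : 0 < θ) (hθ2 : θ < 2*π) :
    ‖Complex.log (1 - (s:ℂ) * Complex.exp ((θ:ℂ) * Complex.I))‖ ≤
      π + Real.log (2 * π ^ 2) - Real.log θ - Real.log (2 * π - θ) := by
  have hπ := Real.pi_gt_three
  have hs0 : (0:ℝ) < s := by linarith
  set w : ℂ := 1 - (s:ℂ) * Complex.exp ((θ:ℂ) * Complex.I) with hw
  have hre : w.re = 1 - s * Real.cos θ := by
    simp [hw, Complex.exp_ofReal_mul_I_re, Complex.exp_ofReal_mul_I_im]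
  have him : w.im = -(s * Real.sin θ) := by
    simp [hw, Complex.exp_ofReal_mul_I_re, Complex.exp_ofReal_mul_I_im]
  have habs2 : ‖w‖^2 = 1 - 2*s*Real.cos θ + s^2 := by
    rw [Complex.sq_norm, Complex.normSq_apply, hre, him]
    nlinarith [Real.sin_sq_add_cos_sq θ]
  -- upper bound on ‖w‖
  have hub : ‖w‖ ≤ 2 := by
    have h1 : ‖w‖ ≤ ‖(1:ℂ)‖ + ‖(s:ℂ) * Complex.exp ((θ:ℂ) * Complex.I)‖ := norm_sub_le _ _
    have h2 : ‖(s:ℂ) * Complex.exp ((θ:ℂ) * Complex.I)‖ = s := by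
      rw [norm_mul, Complex.norm_exp_ofReal_mul_I, Complex.norm_real,
        Real.norm_of_nonneg hs0.le, mul_one]
    rw [h2, norm_one] at h1; linarith
  -- lower bound on ‖w‖
  set m : ℝ := θ * (2*π - θ) / (2*π^2) with hm
  have hm0 : 0 < m := by
    have : 0 < 2*π - θ := by linarith
    positivity
  have hlb : m ≤ ‖w‖ := by
    set δ : ℝ := min θ (2*π - θ) with hδ
    have hδ0 : 0 < δ := lt_min hθ1 (by linarith)
    have hδπ : |δ| ≤ π := by
      rw [abs_of_pos hδ0]
      rcases min_le_iff.mpr (Or.inl (le_refl θ)) with _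
      rcases le_total θ (2*π - θ) with h | h
      · rw [hδ, min_eq_left h]; linarith
      · rw [hδ, min_eq_right h]; linarith
    have hcosδ : Real.cos θ = Real.cos δ := by
      rcases le_total θ (2*π - θ) with h | h
      · rw [hδ, min_eq_left h]
      · rw [hδ, min_eq_right h, Real.cos_two_pi_sub]
    have hcos : Real.cos θ ≤ 1 - 2/π^2 * δ^2 := by
      rw [hcosδ]; exact Real.cos_le_one_sub_mul_cos_sq hδπ
    have hδlb : θ * (2*π - θ) ≤ δ * (2*π) := by
      rcases le_total θ (2*π - θ) with h | h
      · rw [hδ, min_eq_left h]; nlinarith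
      · rw [hδ, min_eq_right h]; nlinarith
    have hπ2 : (0:ℝ) < π^2 := by positivity
    have h2 : ‖w‖^2 ≥ 2*s*(1 - Real.cos θ) := by nlinarith [sq_nonneg (1-s)]
    have h3 : 2*s*(1 - Real.cos θ) ≥ (1:ℝ)*(1 - Real.cos θ) := by
      nlinarith [Real.cos_le_one θ]
    have hA : 2*δ^2 ≤ π^2 * (1 - Real.cos θ) := by
      have h := mul_le_mul_of_nonneg_left hcos hπ2.le
      have hc : π^2 * (1 - 2/π^2*δ^2) = π^2 - 2*δ^2 := by field_simp
      rw [hc] at h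
      nlinarith [h]
    have hB : 1 - Real.cos θ ≤ ‖w‖^2 := by linarith [h2, h3]
    have hF1 : 2*δ^2 ≤ π^2*‖w‖^2 :=
      le_trans hA (by nlinarith [mul_le_mul_of_nonneg_left hB hπ2.le])
    have hF2 : (θ * (2*π - θ))^2 ≤ 4*π^2*δ^2 := by
      have h0 : 0 ≤ θ * (2*π - θ) := by nlinarith
      nlinarith [hδlb]
    have hδ4 : 2*π^2*(2*δ^2) ≤ 2*π^2*(π^2*‖w‖^2) :=
      mul_le_mul_of_nonneg_left hF1 (by positivity)
    have hgoal' : (θ * (2*π - θ))^2 ≤ 4*π^4*‖w‖^2 := by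
      nlinarith [hF2, hδ4, mul_nonneg (mul_nonneg hπ2.le hπ2.le) (sq_nonneg ‖w‖)]
    have hsq : m^2 ≤ ‖w‖^2 := by
      rw [hm, div_pow, div_le_iff₀ (by positivity)]
      nlinarith [hgoal']
    nlinarith [norm_nonneg w, hm0.le]
  -- log bounds
  have hL : |Real.log ‖w‖| ≤ Real.log (2 * π ^ 2) - Real.log θ - Real.log (2 * π - θ) := by
    have hlogm : Real.log m = Real.log θ + Real.log (2*π - θ) - Real.log (2*π^2) := by
      rw [hm, Real.log_div (by nlinarith) (by positivity), Real.log_mul hθ1.ne' (by linarith)]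
    rw [abs_le]
    constructor
    · have := Real.log_le_log hm0 hlb
      linarith
    · have h1 : Real.log ‖w‖ ≤ Real.log 2 := by
        rcases eq_or_lt_of_le (norm_nonneg w) with h | h
        · rw [← h, Real.log_zero]; exact Real.log_nonneg one_le_two
        · exact Real.log_le_log h hub
      have h2 : Real.log 2 ≤ -Real.log m := by
        have hm12 : m ≤ 1/2 := by
          rw [hm, div_le_iff₀ (by positivity)]
          nlinarith [sq_nonneg (θ - π)]
        have := Real.log_le_log hm0 hm12
        have hl2 : Real.log (1/2) = -Real.log 2 := by
          rw [one_div, Real.log_inv]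
        linarith
      linarith
  -- combine
  have hwlog : ‖Complex.log w‖ ≤ |Real.log ‖w‖| + π := by
    have h1 : ‖Complex.log w‖ ≤ |(Complex.log w).re| + |(Complex.log w).im| := by
      exact Complex.norm_le_abs_re_add_abs_im _
    rw [Complex.log_re, Complex.log_im] at h1
    have := Complex.abs_arg_le_pi w
    linarith
  linarith

set_option maxHeartbeats 1000000 in
lemma neg_part_bound (a : ℤ → ℂ) (N : ℕ) (k : ℕ) (X : ℂ) (M : ℝ)
    (ha0 : ∀ n : ℤ, n < -(N : ℤ) → a n = 0)
    (hsum : Summable fun n : ℤ => ‖(n : ℂ) ^ (k+1) * a n * X ^ n‖)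
    (hM : ∀ z : ℂ, ‖z‖ = 1 → ‖∑' n : ℤ, (n : ℂ) ^ (k+1) * a n * (X * z) ^ n‖ ≤ M)
    (s : ℝ) (hs1 : 1/2 ≤ s) (hs2 : s < 1) :
    ‖∑ j ∈ Finset.range N, (s:ℂ)^(j+1) *
        (((-((j:ℤ)+1) : ℤ) : ℂ) ^ k * a (-((j:ℤ)+1)) * X ^ (-((j:ℤ)+1)))‖ ≤
      M * ∫ θ in Ioc (0:ℝ) (2*π), Hker θ := by
  have hπ := Real.pi_gt_three
  have hs0 : (0:ℝ) < s := by linarith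
  have hM0 : 0 ≤ M := le_trans (norm_nonneg _) (hM 1 (by simp))
  set μ : Measure ℝ := volume.restrict (Ioc (0:ℝ) (2*π)) with hμ
  set e : ℤ → ℂ := fun n => (n : ℂ) ^ (k+1) * a n * X ^ n with he
  set Z : ℝ → ℂ := fun θ => Complex.exp ((θ:ℂ) * Complex.I) with hZ
  set Ks : ℝ → ℂ := fun θ => Complex.log (1 - (s:ℂ) * Z θ) with hKs
  have hzcont : Continuous Z := Complex.continuous_exp.comp
    (Complex.continuous_ofReal.mul continuous_const)
  have hzne : ∀ θ : ℝ, Z θ ≠ 0 := fun θ => Complex.exp_ne_zero _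
  have hznorm : ∀ θ : ℝ, ‖Z θ‖ = 1 := fun θ => Complex.norm_exp_ofReal_mul_I θ
  have hsnorm : ∀ θ : ℝ, ‖(s:ℂ) * Z θ‖ = s := by
    intro θ
    rw [norm_mul, hznorm, mul_one, Complex.norm_real, Real.norm_eq_abs, abs_of_nonneg hs0.le]
  have hKscont : Continuous Ks := by
    rw [continuous_iff_continuousAt]
    intro θ
    have hmem : (1 - (s:ℂ) * Z θ) ∈ Complex.slitPlane := by
      rw [Complex.mem_slitPlane_iff]
      left
      have hre : (1 - (s:ℂ) * Z θ).re = 1 - s * Real.cos θ := by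
        simp [hZ, Complex.exp_ofReal_mul_I_re, Complex.exp_ofReal_mul_I_im]
      rw [hre]
      nlinarith [Real.cos_le_one θ, Real.neg_one_le_cos θ]
    have hw : ContinuousAt (fun θ : ℝ => 1 - (s:ℂ) * Z θ) θ :=
      (continuous_const.sub (continuous_const.mul hzcont)).continuousAt
    exact ContinuousAt.comp (x := θ) (g := Complex.log)
      (f := fun θ : ℝ => 1 - (s:ℂ) * Z θ) (continuousAt_clog hmem) hw
  -- the inner integrals
  set In : ℤ → ℂ := fun n => ∫ θ, (Z θ) ^ n * Ks θ ∂μ with hIn_def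
  have hIn : ∀ n : ℤ, In n = -(2*(π:ℂ)) * (s:ℂ) ^ ((-n).toNat) / (((-n).toNat : ℕ) : ℂ) := by
    intro n
    set F2 : ℕ → ℝ → ℂ := fun m θ => -((Z θ) ^ n * (((s:ℂ) * Z θ) ^ m / (m:ℂ))) with hF2
    have hpt : ∀ θ : ℝ, (Z θ) ^ n * Ks θ = ∑' m : ℕ, F2 m θ := by
      intro θ
      have hzn : ‖(s:ℂ) * Z θ‖ < 1 := by rw [hsnorm]; exact hs2
      have h := ((Complex.hasSum_taylorSeries_neg_log hzn).mul_left ((Z θ) ^ n)).neg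
      calc (Z θ) ^ n * Ks θ
          = -((Z θ) ^ n * -Complex.log (1 - (s:ℂ) * Z θ)) := by ring
        _ = ∑' m : ℕ, F2 m θ := h.tsum_eq.symm
    have hF2int : ∀ m : ℕ, Integrable (F2 m) μ := by
      intro m
      exact (((hzcont.zpow₀ n (fun θ => Or.inl (hzne θ))).mul
        (((continuous_const.mul hzcont).pow m).div_const _)).neg).integrableOn_Ioc
    have hF2normval : ∀ (m : ℕ) (θ : ℝ), ‖F2 m θ‖ = s^m / m := by
      intro m θ
      rw [hF2]
      simp only [norm_neg, norm_mul, norm_div, norm_zpow, hznorm, one_zpow, one_mul,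
        norm_pow, hsnorm, Complex.norm_natCast]
    have hF2sum : Summable fun m : ℕ => ∫ θ, ‖F2 m θ‖ ∂μ := by
      have heq : ∀ m : ℕ, ∫ θ, ‖F2 m θ‖ ∂μ = (2*π) * (s^m/m) := by
        intro m
        simp_rw [hF2normval]
        rw [integral_const]
        simp [hμ, Real.volume_Ioc, ENNReal.toReal_ofReal (by positivity : (0:ℝ) ≤ 2*π),
          smul_eq_mul, Real.pi_nonneg]
      simp_rw [heq]
      refine Summable.of_nonneg_of_le (fun m => by positivity) (fun m => ?_)
        ((summable_geometric_of_lt_one hs0.le hs2).mul_left (2*π))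
      apply mul_le_mul_of_nonneg_left _ (by positivity)
      rcases Nat.eq_zero_or_pos m with rfl | hm
      · simp
      · exact div_le_self (by positivity) (by exact_mod_cast hm)
    have hswap2 := integral_tsum_of_summable_integral_norm hF2int hF2sum
    have hInt_eq : In n = ∑' m : ℕ, ∫ θ, F2 m θ ∂μ := by
      rw [hswap2, hIn_def]
      exact integral_congr_ae (ae_of_all _ hpt)
    have hF2int_eq : ∀ m : ℕ, (∫ θ, F2 m θ ∂μ) =
        -((s:ℂ)^m/(m:ℂ)) * (if n + (m:ℤ) = 0 then (2*π:ℂ) else 0) := by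
      intro m
      have hsplitfn : ∀ θ : ℝ, F2 m θ = (-((s:ℂ)^m/(m:ℂ))) * (Z θ) ^ (n + (m:ℤ)) := by
        intro θ
        rw [hF2]
        simp only
        rw [zpow_add₀ (hzne θ), zpow_natCast, mul_pow]
        ring
      simp_rw [hsplitfn]
      rw [integral_const_mul]
      congr 1
      exact circle_orth (n + (m:ℤ))
    rw [hInt_eq, tsum_congr hF2int_eq]
    rcases lt_or_ge n 0 with hn | hn
    · have hm₀ : (((-n).toNat : ℕ) : ℤ) = -n := Int.toNat_of_nonneg (by omega)
      rw [tsum_eq_single (-n).toNat ?_]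
      · rw [if_pos (by omega)]
        ring
      · intro m hm
        rw [if_neg ?_, mul_zero]
        intro h
        apply hm
        omega
    · have h0 : (-n).toNat = 0 := by omega
      have hzero : ∀ m : ℕ, -((s:ℂ)^m/(m:ℂ)) * (if n + (m:ℤ) = 0 then (2*π:ℂ) else 0) = 0 := by
        intro m
        rcases Nat.eq_zero_or_pos m with rfl | hm
        · simp
        · rw [if_neg (by omega), mul_zero]
      rw [tsum_congr hzero, tsum_zero, h0]
      simp
  -- swap 1
  set F : ℤ → ℝ → ℂ := fun n θ => e n * ((Z θ) ^ n * Ks θ) with hF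
  have hFint : ∀ n : ℤ, Integrable (F n) μ := fun n =>
    (continuous_const.mul ((hzcont.zpow₀ n (fun θ => Or.inl (hzne θ))).mul
      hKscont)).integrableOn_Ioc
  have hFsum : Summable fun n : ℤ => ∫ θ, ‖F n θ‖ ∂μ := by
    have heq : ∀ n : ℤ, ∫ θ, ‖F n θ‖ ∂μ = ‖e n‖ * ∫ θ, ‖Ks θ‖ ∂μ := by
      intro n
      have hval : ∀ θ : ℝ, ‖F n θ‖ = ‖e n‖ * ‖Ks θ‖ := by
        intro θ
        rw [hF]
        simp only [norm_mul, norm_zpow, hznorm, one_zpow, one_mul]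
      simp_rw [hval]
      exact integral_const_mul _ _
    simp_rw [heq]
    exact hsum.mul_right _
  have hswap1 := integral_tsum_of_summable_integral_norm hFint hFsum
  have hFn_eq : ∀ n : ℤ, (∫ θ, F n θ ∂μ) = e n * In n := fun n => integral_const_mul _ _
  -- identify the tsum with the finite sum
  have hvanish : ∀ n : ℤ, n ∉ (Finset.range N).image (fun j : ℕ => -((j:ℤ)+1)) →
      e n * In n = 0 := by
    intro n hn
    rcases lt_or_ge n 0 with h | h
    · obtain ⟨j, rfl⟩ : ∃ j : ℕ, n = -((j:ℤ)+1) := ⟨(-n-1).toNat, by omega⟩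
      have hjN : N ≤ j := by
        by_contra hlt
        exact hn (Finset.mem_image.mpr ⟨j, Finset.mem_range.mpr (lt_of_not_ge hlt), rfl⟩)
      have ha : a (-((j:ℤ)+1)) = 0 := ha0 _ (by omega)
      rw [he]
      simp only [ha, mul_zero, zero_mul]
    · rw [hIn]
      have h0 : (-n).toNat = 0 := by omega
      rw [h0]
      simp
  have hinj : Set.InjOn (fun j : ℕ => -((j:ℤ)+1)) (Finset.range N) := by
    intro x _ y _ h
    simp only at h
    omega
  have hLHS : ∑' n : ℤ, (e n * In n) =
      ∑ j ∈ Finset.range N, (2*(π:ℂ)) * ((s:ℂ)^(j+1) *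
        (((-((j:ℤ)+1) : ℤ) : ℂ) ^ k * a (-((j:ℤ)+1)) * X ^ (-((j:ℤ)+1)))) := by
    rw [tsum_eq_sum (s := (Finset.range N).image (fun j : ℕ => -((j:ℤ)+1))) hvanish,
      Finset.sum_image hinj]
    apply Finset.sum_congr rfl
    intro j _
    rw [hIn]
    have ht : ((-(-((j:ℤ)+1))).toNat : ℕ) = j+1 := by omega
    rw [ht, he]
    have hcast : ((-((j:ℤ)+1) : ℤ) : ℂ) = -((j:ℂ)+1) := by push_cast; ring
    have hne : ((j:ℂ)+1) ≠ 0 := Nat.cast_add_one_ne_zero j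
    simp only [hcast]
    rw [pow_succ]
    push_cast
    field_simp
  -- the main identity
  have hmain : (2*(π:ℂ)) * (∑ j ∈ Finset.range N, (s:ℂ)^(j+1) *
      (((-((j:ℤ)+1) : ℤ) : ℂ) ^ k * a (-((j:ℤ)+1)) * X ^ (-((j:ℤ)+1)))) =
      ∫ θ, (∑' n : ℤ, F n θ) ∂μ := by
    rw [← hswap1, tsum_congr hFn_eq, hLHS, Finset.mul_sum]
  -- bound the integral
  have hGbound : ∀ᵐ θ ∂μ, ‖∑' n : ℤ, F n θ‖ ≤ M * Hker θ := by
    rw [hμ, ae_restrict_iff' measurableSet_Ioc]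
    have hne2π : ∀ᵐ θ : ℝ, θ ≠ 2*π := by
      have h : {θ : ℝ | ¬ θ ≠ 2*π} = {2*π} := by
        ext θ; simp [not_not]
      rw [MeasureTheory.ae_iff, h]
      exact measure_singleton _
    filter_upwards [hne2π] with θ hθne hθmem
    have hθ2 : θ < 2*π := lt_of_le_of_ne hθmem.2 hθne
    have hθ1 : 0 < θ := hθmem.1
    have hfac : ∑' n : ℤ, F n θ = (∑' n : ℤ, e n * (Z θ) ^ n) * Ks θ := by
      rw [← tsum_mul_right]
      exact tsum_congr fun n => by rw [hF]; ring
    rw [hfac, norm_mul]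
    have h1 : ‖∑' n : ℤ, e n * (Z θ) ^ n‖ ≤ M := by
      refine le_trans (le_of_eq ?_) (hM (Z θ) (hznorm θ))
      congr 1
      exact tsum_congr fun n => by rw [he, mul_zpow]; ring
    have h2 : ‖Ks θ‖ ≤ Hker θ := kernel_bound hs1 hs2 hθ1 hθ2
    exact mul_le_mul h1 h2 (norm_nonneg _) hM0
  have hIntMH : Integrable (fun θ => M * Hker θ) μ := integrableOn_Hker.const_mul M
  have hbound := norm_integral_le_of_norm_le hIntMH hGbound
  rw [integral_const_mul] at hbound
  rw [← hmain] at hbound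
  rw [norm_mul] at hbound
  have hnorm2π : ‖(2*(π:ℂ))‖ = 2*π := by
    rw [norm_mul]
    simp [Complex.norm_real, Real.norm_eq_abs, abs_of_nonneg Real.pi_nonneg]
  rw [hnorm2π] at hbound
  have hS0 : 0 ≤ ‖∑ j ∈ Finset.range N, (s:ℂ)^(j+1) *
      (((-((j:ℤ)+1) : ℤ) : ℂ) ^ k * a (-((j:ℤ)+1)) * X ^ (-((j:ℤ)+1)))‖ := norm_nonneg _
  nlinarith [hbound, hS0]


end LaurentTrunc

open LaurentTrunc in
/-- Uniform bound for the nonnegative part of a Laurent series in terms of the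
Euler-operator derivatives of the full series:
`|D^k f₊(X)| ≤ C·(|D^k f(X)| + sup_{|z|=1} |D^{k+1} f(Xz)|)` on the annulus. -/
theorem laurent_truncation_bound :
    ∃ C : ℝ, 0 < C ∧
      ∀ (ρ : ℝ), 1 < ρ → ∀ (N : ℕ) (a : ℤ → ℂ),
        (∀ n : ℤ, n < -(N : ℤ) → a n = 0) →
        (∀ X : ℂ, 0 < ‖X‖ → ‖X‖ < ρ → Summable fun n : ℤ => ‖a n * X ^ n‖) →
        ∀ (k : ℕ) (X : ℂ), 0 < ‖X‖ → ‖X‖ < ρ →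
          ‖∑' n : ℕ, (n : ℂ) ^ k * a (n : ℤ) * X ^ n‖ ≤
            C * (‖∑' n : ℤ, (n : ℂ) ^ k * a n * X ^ n‖ +
              ⨆ z : {z : ℂ // ‖z‖ = 1},
                ‖∑' n : ℤ, (n : ℂ) ^ (k + 1) * a n * (X * (z : ℂ)) ^ n‖) := by
  have hπ := Real.pi_gt_three
  set C0 : ℝ := ∫ θ in Ioc (0:ℝ) (2*π), Hker θ with hC0
  have hC0_nonneg : 0 ≤ C0 :=
    setIntegral_nonneg measurableSet_Ioc (fun θ hθ => Hker_nonneg hθ.1 hθ.2)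
  refine ⟨1 + C0, by linarith, ?_⟩
  intro ρ hρ N a ha0 hsum k X hX0 hXρ
  -- summability of weighted series
  set r : ℝ := ‖X‖ with hr
  set r' : ℝ := (r + ρ)/2 with hr'def
  have hrr' : r < r' := by rw [hr'def]; linarith
  have hr'ρ : r' < ρ := by rw [hr'def]; linarith
  have hr'0 : 0 < r' := lt_trans hX0 hrr'
  have hnr' : ‖((r' : ℝ) : ℂ)‖ = r' := by
    rw [Complex.norm_real, Real.norm_eq_abs, abs_of_pos hr'0]
  have hA : Summable fun n : ℤ => ‖a n * ((r' : ℝ) : ℂ) ^ n‖ :=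
    hsum _ (by rw [hnr']; exact hr'0) (by rw [hnr']; exact hr'ρ)
  set A : ℝ := ∑' m : ℤ, ‖a m * ((r' : ℝ) : ℂ) ^ m‖ with hAdef
  have hA_le : ∀ n : ℤ, ‖a n‖ * r' ^ n ≤ A := by
    intro n
    have h := hA.le_tsum n (fun j _ => norm_nonneg _)
    rwa [norm_mul, norm_zpow, hnr'] at h
  have hSnorm : ∀ (j : ℕ) (w : ℂ), ‖w‖ = r →
      Summable fun n : ℤ => ‖(n : ℂ) ^ j * a n * w ^ n‖ := by
    intro j w hwr
    apply Summable.of_nat_of_neg_add_one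
    · have hr0 : 0 ≤ r := norm_nonneg X
      have ht : ‖r/r'‖ < 1 := by
        rw [Real.norm_eq_abs, abs_of_nonneg (by positivity), div_lt_one hr'0]
        exact hrr'
      have hgeom : Summable (fun n : ℕ => A * ((n:ℝ)^j * (r/r')^n)) :=
        (summable_pow_mul_geometric_of_norm_lt_one j ht).mul_left A
      refine hgeom.of_nonneg_of_le (fun n => norm_nonneg _) (fun n => ?_)
      have hnormval : ‖(((n:ℕ):ℤ) : ℂ) ^ j * a (n:ℤ) * w ^ ((n:ℕ):ℤ)‖
          = (n:ℝ)^j * ‖a (n:ℤ)‖ * r^n := by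
        rw [show ((((n:ℕ):ℤ)) : ℂ) = ((n:ℕ) : ℂ) by push_cast; rfl, zpow_natCast,
          norm_mul, norm_mul, norm_pow, norm_pow, Complex.norm_natCast, hwr]
      rw [hnormval]
      have hkey : (n:ℝ)^j * ‖a (n:ℤ)‖ * r^n = ((n:ℝ)^j * (r/r')^n) * (‖a (n:ℤ)‖ * r'^n) := by
        rw [div_pow]
        field_simp
      rw [hkey]
      have h2 : ‖a (n:ℤ)‖ * r'^(n:ℕ) ≤ A := by
        have := hA_le (n:ℤ)
        rwa [zpow_natCast] at this
      calc ((n:ℝ)^j * (r/r')^n) * (‖a (n:ℤ)‖ * r'^n)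
          ≤ ((n:ℝ)^j * (r/r')^n) * A := by
            apply mul_le_mul_of_nonneg_left h2 (by positivity)
        _ = A * ((n:ℝ)^j * (r/r')^n) := by ring
    · refine summable_of_ne_finset_zero (s := Finset.range N) (fun n hn => ?_)
      have hn' : N ≤ n := by simpa using Finset.mem_range.not.mp hn
      have ha : a (-((n:ℤ)+1)) = 0 := ha0 _ (by omega)
      simp only [ha, mul_zero, zero_mul, norm_zero]
  -- summability of the base series
  have hSk : Summable fun n : ℤ => (n : ℂ) ^ k * a n * X ^ n :=
    Summable.of_norm (hSnorm k X rfl)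
  have hNat : Summable fun n : ℕ => (((n:ℕ):ℤ) : ℂ) ^ k * a (n:ℤ) * X ^ ((n:ℕ):ℤ) := by
    have hinj : Function.Injective ((↑) : ℕ → ℤ) := fun x y h => by exact_mod_cast h
    exact hSk.comp_injective hinj
  have hNeg : Summable fun n : ℕ =>
      ((-((n:ℤ)+1) : ℤ) : ℂ) ^ k * a (-((n:ℤ)+1)) * X ^ (-((n:ℤ)+1)) := by
    have hinj : Function.Injective (fun n : ℕ => -((n:ℤ)+1)) := fun x y h => by
      simp only at h; omega
    exact hSk.comp_injective hinj
  have hsplit := tsum_of_nat_of_neg_add_one hNat hNeg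
    (f := fun n : ℤ => (n : ℂ) ^ k * a n * X ^ n)
  -- T and its finite representation
  set T : ℂ := ∑' n : ℕ, ((-((n:ℤ)+1) : ℤ) : ℂ) ^ k * a (-((n:ℤ)+1)) * X ^ (-((n:ℤ)+1)) with hT
  have hT_fin : T = ∑ j ∈ Finset.range N,
      (((-((j:ℤ)+1) : ℤ) : ℂ) ^ k * a (-((j:ℤ)+1)) * X ^ (-((j:ℤ)+1))) := by
    rw [hT]
    refine tsum_eq_sum (fun b hb => ?_)
    have hb' : N ≤ b := by simpa using Finset.mem_range.not.mp hb
    have ha : a (-((b:ℤ)+1)) = 0 := ha0 _ (by omega)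
    simp only [ha, mul_zero, zero_mul]
  -- the sup
  set M : ℝ := ⨆ z : {z : ℂ // ‖z‖ = 1},
    ‖∑' n : ℤ, (n : ℂ) ^ (k + 1) * a n * (X * (z : ℂ)) ^ n‖ with hMdef
  have hnormxz : ∀ z : ℂ, ‖z‖ = 1 → ‖X * z‖ = r := fun z hz => by
    rw [norm_mul, hz, mul_one]
  have hbdd : BddAbove (Set.range fun z : {z : ℂ // ‖z‖ = 1} =>
      ‖∑' n : ℤ, (n : ℂ) ^ (k + 1) * a n * (X * (z : ℂ)) ^ n‖) := by
    refine ⟨∑' n : ℤ, ‖(n : ℂ) ^ (k+1) * a n * X ^ n‖, ?_⟩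
    rintro x ⟨z, rfl⟩
    have hs' := hSnorm (k+1) (X * (z:ℂ)) (hnormxz z z.2)
    refine le_trans (norm_tsum_le_tsum_norm hs') (le_of_eq (tsum_congr fun n => ?_))
    simp only [norm_mul, norm_zpow, hnormxz z z.2, ← hr]
  have hM : ∀ z : ℂ, ‖z‖ = 1 →
      ‖∑' n : ℤ, (n : ℂ) ^ (k+1) * a n * (X * z) ^ n‖ ≤ M := fun z hz =>
    le_ciSup hbdd ⟨z, hz⟩
  have hM0 : 0 ≤ M := le_trans (norm_nonneg _) (hM 1 (by simp))
  -- bound on T by limit of the regularized bounds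
  have hTbound : ‖T‖ ≤ M * C0 := by
    set sseq : ℕ → ℝ := fun i => 1 - 1/((i:ℝ)+2) with hsseq
    have hs1 : ∀ i, 1/2 ≤ sseq i := by
      intro i
      rw [hsseq]
      simp only
      have h2 : (2:ℝ) ≤ (i:ℝ)+2 := by
        have : (0:ℝ) ≤ (i:ℝ) := Nat.cast_nonneg i
        linarith
      have : 1/((i:ℝ)+2) ≤ 1/2 := one_div_le_one_div_of_le (by norm_num) h2
      linarith
    have hs2 : ∀ i, sseq i < 1 := by
      intro i
      rw [hsseq]
      simp only
      have : 0 < 1/((i:ℝ)+2) := by positivity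
      linarith
    have hstend : Tendsto sseq atTop (𝓝 1) := by
      rw [hsseq]
      have h1 : Tendsto (fun i : ℕ => ((i:ℝ)+2)) atTop atTop :=
        tendsto_atTop_add_const_right _ 2 tendsto_natCast_atTop_atTop
      have h2 : Tendsto (fun i : ℕ => 1/((i:ℝ)+2)) atTop (𝓝 0) := by
        simpa [one_div, Pi.inv_def] using h1.inv_tendsto_atTop
      have := tendsto_const_nhds.sub h2 (f := fun _ : ℕ => (1:ℝ))
      simpa using this
    have hTs_tend : Tendsto (fun i => ∑ j ∈ Finset.range N, ((sseq i : ℝ):ℂ)^(j+1) *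
        (((-((j:ℤ)+1) : ℤ) : ℂ) ^ k * a (-((j:ℤ)+1)) * X ^ (-((j:ℤ)+1)))) atTop (𝓝 T) := by
      rw [hT_fin]
      refine tendsto_finset_sum _ (fun j _ => ?_)
      have hc : Tendsto (fun i => ((sseq i : ℝ):ℂ)) atTop (𝓝 1) := by
        have := (Complex.continuous_ofReal.tendsto 1).comp hstend
        simpa [Function.comp_def] using this
      have := ((hc.pow (j+1)).mul_const
        (((-((j:ℤ)+1) : ℤ) : ℂ) ^ k * a (-((j:ℤ)+1)) * X ^ (-((j:ℤ)+1))))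
      simpa using this
    refine le_of_tendsto hTs_tend.norm (Eventually.of_forall (fun i => ?_))
    exact neg_part_bound a N k X M ha0 (hSnorm (k+1) X rfl) hM (sseq i) (hs1 i) (hs2 i)
  -- final assembly
  have hposeq : (∑' n : ℕ, (n : ℂ) ^ k * a (n : ℤ) * X ^ n)
      = ∑' n : ℕ, (((n:ℕ):ℤ) : ℂ) ^ k * a (n:ℤ) * X ^ ((n:ℕ):ℤ) := by
    refine tsum_congr fun n => ?_
    rw [show ((((n:ℕ):ℤ)) : ℂ) = ((n:ℕ) : ℂ) by push_cast; rfl, zpow_natCast]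
  rw [hposeq]
  have hPT : (∑' n : ℕ, (((n:ℕ):ℤ) : ℂ) ^ k * a (n:ℤ) * X ^ ((n:ℕ):ℤ))
      = (∑' n : ℤ, (n : ℂ) ^ k * a n * X ^ n) - T := by
    rw [hsplit, hT]; ring
  rw [hPT]
  have h1 : ‖(∑' n : ℤ, (n : ℂ) ^ k * a n * X ^ n) - T‖ ≤
      ‖∑' n : ℤ, (n : ℂ) ^ k * a n * X ^ n‖ + ‖T‖ := norm_sub_le _ _
  have hSnn : 0 ≤ ‖∑' n : ℤ, (n : ℂ) ^ k * a n * X ^ n‖ := norm_nonneg _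
  nlinarith [mul_nonneg hC0_nonneg hSnn, mul_nonneg hC0_nonneg hM0, hTbound, h1, hM0]
end

section
/- Let p be an odd prime, n ≥ 1 an integer, and t ∈ ℚ_p with t ≠ 0. Then ‖t − t⁻¹‖_p ≤ p^{−n} if and only if ‖t − 1‖_p ≤ p^{−n} or ‖t + 1‖_p ≤ p^{−n}. -/
lemma two_norm_one (p : ℕ) [Fact p.Prime] (hp2 : p ≠ 2) : ‖(2 : ℚ_[p])‖ = 1 := by
  have hc : ((2 : ℤ) : ℚ_[p]) = 2 := by norm_num
  have h1 : ‖((2 : ℤ) : ℚ_[p])‖ ≤ 1 := Padic.norm_int_le_one 2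
  have h2 : ¬ ‖((2 : ℤ) : ℚ_[p])‖ < 1 := by
    rw [Padic.norm_intCast_lt_one_iff]
    intro h
    have h' : p ∣ 2 := by exact_mod_cast h
    have := Nat.le_of_dvd (by norm_num) h'
    have hp := (Fact.out : p.Prime).two_le
    omega
  rw [hc] at h1 h2
  rcases lt_or_eq_of_le h1 with h | h
  · exact absurd h h2
  · exact h

/-- For an odd prime `p`, `n ≥ 1` and `t ∈ ℚ_p^×`:
`‖t − t⁻¹‖ ≤ p^{−n}` iff `t ∈ ±1 + pⁿℤ_p`. -/
theorem padic_self_sub_inv_small_iff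
    (p : ℕ) [Fact p.Prime] (hp2 : p ≠ 2)
    (n : ℕ) (hn : 1 ≤ n) (t : ℚ_[p]) (ht : t ≠ 0) :
    ‖t - t⁻¹‖ ≤ (p : ℝ) ^ (-(n : ℤ)) ↔
      ‖t - 1‖ ≤ (p : ℝ) ^ (-(n : ℤ)) ∨ ‖t + 1‖ ≤ (p : ℝ) ^ (-(n : ℤ)) := by
  have hp1 : (1 : ℝ) < p := by exact_mod_cast (Fact.out : p.Prime).one_lt
  have hpn : (p : ℝ) ^ (-(n : ℤ)) < 1 := by
    have : (p : ℝ) ^ (-(n : ℤ)) < (p : ℝ) ^ (0 : ℤ) := by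
      apply zpow_lt_zpow_right₀ hp1
      omega
    simpa using this
  have h2 : ‖(2 : ℚ_[p])‖ = 1 := two_norm_one p hp2
  have key : ∀ s : ℚ_[p], s ≠ 0 → ‖s - 1‖ ≤ (p : ℝ) ^ (-(n : ℤ)) →
      ‖s - s⁻¹‖ ≤ (p : ℝ) ^ (-(n : ℤ)) := by
    intro s hs h
    have hs1 : ‖s - 1‖ < 1 := lt_of_le_of_lt h hpn
    have hns : ‖s‖ = 1 := by
      have heq : s = (s - 1) + 1 := by ring
      rw [heq, Padic.add_eq_max_of_ne (by rw [norm_one]; exact ne_of_lt hs1),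
        norm_one, max_eq_right hs1.le]
    have hns2 : ‖s + 1‖ = 1 := by
      have heq : s + 1 = (s - 1) + 2 := by ring
      rw [heq, Padic.add_eq_max_of_ne (by rw [h2]; exact ne_of_lt hs1), h2,
        max_eq_right hs1.le]
    have hfac : s - s⁻¹ = (s - 1) * (s + 1) * s⁻¹ := by field_simp; ring
    calc ‖s - s⁻¹‖ = ‖s - 1‖ * ‖s + 1‖ * ‖s⁻¹‖ := by rw [hfac, norm_mul, norm_mul]
      _ = ‖s - 1‖ := by rw [hns2, norm_inv, hns]; ring
      _ ≤ _ := h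
  constructor
  · intro h
    have hts : ‖t‖ = 1 := by
      by_contra hne
      have hinv : ‖(-t⁻¹ : ℚ_[p])‖ = ‖t‖⁻¹ := by rw [norm_neg, norm_inv]
      have hne' : ‖t‖ ≠ ‖(-t⁻¹ : ℚ_[p])‖ := by
        rw [hinv]
        intro heq
        have ht0 : 0 < ‖t‖ := norm_pos_iff.mpr ht
        have : ‖t‖ ^ 2 = 1 := by
          field_simp at heq
          nlinarith
        have : ‖t‖ = 1 := by nlinarith
        exact hne this
      have hmax : ‖t - t⁻¹‖ = max ‖t‖ ‖t‖⁻¹ := by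
        rw [sub_eq_add_neg, Padic.add_eq_max_of_ne hne', hinv]
      have ht0 : 0 < ‖t‖ := norm_pos_iff.mpr ht
      have hone : 1 ≤ max ‖t‖ ‖t‖⁻¹ := by
        rcases le_total ‖t‖ 1 with hle | hle
        · have : 1 ≤ ‖t‖⁻¹ := (one_le_inv₀ ht0).mpr hle
          exact le_max_of_le_right this
        · exact le_max_of_le_left hle
      rw [hmax] at h
      linarith
    have hle1 : ‖t + 1‖ ≤ 1 := by
      calc ‖t + 1‖ ≤ max ‖t‖ ‖(1 : ℚ_[p])‖ := Padic.nonarchimedean t 1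
        _ = 1 := by rw [hts, norm_one, max_self]
    have hfac : ‖t - t⁻¹‖ = ‖t - 1‖ * ‖t + 1‖ := by
      have heq : t - t⁻¹ = (t - 1) * (t + 1) * t⁻¹ := by field_simp; ring
      rw [heq, norm_mul, norm_mul, norm_inv, hts]
      ring
    rcases lt_or_eq_of_le hle1 with hlt | heq1
    · right
      have ht1 : ‖t - 1‖ = 1 := by
        have heq : t - 1 = (t + 1) + (-2) := by ring
        rw [heq, Padic.add_eq_max_of_ne (by rw [norm_neg, h2]; exact ne_of_lt hlt),
          norm_neg, h2, max_eq_right hlt.le]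
      rw [hfac, ht1, one_mul] at h
      exact h
    · left
      rw [hfac, heq1, mul_one] at h
      exact h
  · rintro (h | h)
    · exact key t ht h
    · have hkey := key (-t) (neg_ne_zero.mpr ht)
        (by rw [show -t - 1 = -(t + 1) by ring, norm_neg]; exact h)
      rw [show -t - (-t)⁻¹ = -(t - t⁻¹) by rw [inv_neg]; ring, norm_neg] at hkey
      exact hkey
end

section
/- Let p be an odd prime and let ψ : ℚ_p → ℂ be an additive character (AddChar) such that ψ(x) = 1 for all x ∈ ℤ_p and ψ is nontrivial on p⁻¹ℤ_p (i.e. ψ has conductor exponent 0). Let n ≥ 2 be an integer, set m := ⌊n/2⌋, and let χ : ℚ_p^× → ℂ^× be a group homomorphism with χ(u) = 1 for all u ∈ 1 + pⁿℤ_p. Then there exists c ∈ ℤ_p such that for all u ∈ pᵐℤ_p: χ(1 + u) = ψ( p^{−n} · c · (u − u²/2) ). Moreover c is uniquely determined modulo p^{n−m}ℤ_p: any two such c, c' satisfy c − c' ∈ p^{n−m}ℤ_p. -/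
namespace PadicCharAux

variable {p : ℕ} [Fact p.Prime]

lemma p_pos' : (0:ℝ) < p := by exact_mod_cast (Fact.out : p.Prime).pos

lemma one_lt_p' : (1:ℝ) < p := by exact_mod_cast (Fact.out : p.Prime).one_lt

lemma zmono {a b : ℤ} (h : a ≤ b) : ((p:ℝ))^a ≤ (p:ℝ)^b :=
  zpow_le_zpow_right₀ (le_of_lt one_lt_p') h

lemma zpos (a : ℤ) : (0:ℝ) < (p:ℝ)^a := zpow_pos p_pos' a

lemma pz_lt_one {a : ℤ} (ha : a < 0) : ((p:ℝ))^a < 1 := by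
  have := zpow_lt_zpow_right₀ (one_lt_p' (p := p)) ha
  simpa using this

lemma nmul {x y : ℚ_[p]} {a b : ℤ}
    (hx : ‖x‖ ≤ (p:ℝ)^a) (hy : ‖y‖ ≤ (p:ℝ)^b) : ‖x*y‖ ≤ (p:ℝ)^(a+b) := by
  rw [norm_mul, zpow_add₀ (ne_of_gt p_pos')]
  exact mul_le_mul hx hy (norm_nonneg _) (le_of_lt (zpos a))

lemma nadd {x y : ℚ_[p]} {C : ℝ} (hx : ‖x‖ ≤ C) (hy : ‖y‖ ≤ C) : ‖x+y‖ ≤ C :=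
  le_trans (Padic.nonarchimedean x y) (max_le hx hy)

lemma norm_two' (hp2 : p ≠ 2) : ‖(2:ℚ_[p])‖ = 1 := by
  have h1 : ‖((2:ℤ):ℚ_[p])‖ ≤ 1 := Padic.norm_int_le_one 2
  have h2 : ¬ ‖((2:ℤ):ℚ_[p])‖ < 1 := by
    rw [Padic.norm_intCast_lt_one_iff]
    intro hd
    have : p ∣ 2 := by exact_mod_cast hd
    exact hp2 ((Nat.prime_dvd_prime_iff_eq (Fact.out : p.Prime) Nat.prime_two).mp this)
  have : ‖((2:ℤ):ℚ_[p])‖ = 1 := le_antisymm h1 (not_lt.mp h2)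
  simpa using this

lemma norm_div_two (hp2 : p ≠ 2) (x : ℚ_[p]) : ‖x/2‖ = ‖x‖ := by
  rw [norm_div, norm_two' hp2, div_one]

lemma norm_one_add {t : ℚ_[p]} (h : ‖t‖ < 1) : ‖1 + t‖ = 1 := by
  rw [Padic.add_eq_max_of_ne (by rw [norm_one]; exact ne_of_gt h)]
  rw [norm_one]
  exact max_eq_left h.le

/-- the truncated logarithm -/
noncomputable def ell (u : ℚ_[p]) : ℚ_[p] := u - u^2/2

lemma ellA (hp2 : p ≠ 2) {m n : ℕ} (h3 : n ≤ 3*m) {u v : ℚ_[p]}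
    (hu : ‖u‖ ≤ (p:ℝ)^(-(m:ℤ))) (hv : ‖v‖ ≤ (p:ℝ)^(-(m:ℤ))) :
    ‖ell (u + v + u*v) - (ell u + ell v)‖ ≤ (p:ℝ)^(-(n:ℤ)) := by
  have key : ell (u + v + u*v) - (ell u + ell v)
      = (-(u*u*v) + -(u*(v*v))) + -(u*u*(v*v)/2) := by
    simp only [ell]; ring
  have t1 : ‖u*u*v‖ ≤ (p:ℝ)^(-(n:ℤ)) :=
    le_trans (nmul (nmul hu hu) hv) (zmono (by push_cast; omega))
  have t2 : ‖u*(v*v)‖ ≤ (p:ℝ)^(-(n:ℤ)) :=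
    le_trans (nmul hu (nmul hv hv)) (zmono (by push_cast; omega))
  have t3 : ‖u*u*(v*v)/2‖ ≤ (p:ℝ)^(-(n:ℤ)) := by
    rw [norm_div_two hp2]
    exact le_trans (nmul (nmul hu hu) (nmul hv hv)) (zmono (by push_cast; omega))
  rw [key]
  exact nadd (nadd (by simpa using t1) (by simpa using t2)) (by simpa using t3)

lemma ellB (hp2 : p ≠ 2) {u v : ℚ_[p]}
    (hu : ‖u‖ ≤ (p:ℝ)^(-1:ℤ)) (hv : ‖v‖ ≤ (p:ℝ)^(-1:ℤ)) {C : ℝ}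
    (h : ‖ell u - ell v‖ ≤ C) : ‖u - v‖ ≤ C := by
  have key : ell u - ell v = (u - v) * (1 + -((u+v)/2)) := by
    simp only [ell]; ring
  have hlt : ‖-((u+v)/2)‖ < 1 := by
    rw [norm_neg, norm_div_two hp2]
    exact lt_of_le_of_lt (nadd hu hv) (pz_lt_one (by omega))
  have hone : ‖1 + -((u+v)/2)‖ = 1 := norm_one_add hlt
  calc ‖u - v‖ = ‖ell u - ell v‖ := by rw [key, norm_mul, hone, mul_one]
  _ ≤ C := h

lemma ellD (hp2 : p ≠ 2) {m n : ℕ} (h3 : n ≤ 3*m) {u₀ : ℚ_[p]}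
    (hu₀ : ‖u₀‖ ≤ (p:ℝ)^(-(m:ℤ))) (k : ℕ) :
    ‖(1+u₀)^k - 1‖ ≤ (p:ℝ)^(-(m:ℤ)) ∧
    ‖ell ((1+u₀)^k - 1) - (k:ℚ_[p]) * ell u₀‖ ≤ (p:ℝ)^(-(n:ℤ)) := by
  induction k with
  | zero => simp [ell, le_of_lt (zpos _)]
  | succ k ih =>
    obtain ⟨ih1, ih2⟩ := ih
    set w := (1+u₀)^k - 1 with hw
    have hstep : (1+u₀)^(k+1) - 1 = w + u₀ + w*u₀ := by
      have : (1+u₀)^(k+1) = (1 + w) * (1+u₀) := by rw [hw, pow_succ]; ring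
      rw [this]; ring
    constructor
    · rw [hstep]
      refine nadd (nadd ih1 hu₀) ?_
      exact le_trans (nmul ih1 hu₀) (zmono (by omega))
    · rw [hstep]
      have hA := ellA hp2 h3 ih1 hu₀
      have key : ell (w + u₀ + w*u₀) - ((k:ℚ_[p])+1) * ell u₀
          = (ell (w + u₀ + w*u₀) - (ell w + ell u₀)) + (ell w - (k:ℚ_[p]) * ell u₀) := by
        ring
      push_cast
      rw [key]
      exact nadd hA ih2

lemma approx (y : ℚ_[p]) (hy : ‖y‖ ≤ 1) (s : ℕ) :
    ∃ k : ℕ, ‖y - (k:ℚ_[p])‖ ≤ (p:ℝ)^(-(s:ℤ)) := by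
  refine ⟨PadicInt.appr (⟨y, hy⟩ : ℤ_[p]) s, ?_⟩
  have h := PadicInt.appr_spec s (⟨y, hy⟩ : ℤ_[p])
  rw [← PadicInt.norm_le_pow_iff_mem_span_pow] at h
  exact h

end PadicCharAux

open PadicCharAux

/-- Additive parameter of a multiplicative character (split case): if `ψ` is an
additive character of `ℚ_p` (`p` odd) of conductor exponent `0` and `χ` is a
character of `ℚ_p^×` trivial on `1 + pⁿℤ_p` (`n ≥ 2`, `m = ⌊n/2⌋`), then there
is `c ∈ ℤ_p`, unique modulo `p^{n−m}ℤ_p`, with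
`χ(1+u) = ψ(p^{−n}·c·(u − u²/2))` for all `u ∈ pᵐℤ_p`. -/
theorem padic_char_additive_parameter
    (p : ℕ) [Fact p.Prime] (hp2 : p ≠ 2)
    (ψ : AddChar ℚ_[p] ℂ)
    (hψ1 : ∀ x : ℚ_[p], ‖x‖ ≤ 1 → ψ x = 1)
    (hψ2 : ∃ x : ℚ_[p], ‖x‖ ≤ (p : ℝ) ∧ ψ x ≠ 1)
    (n : ℕ) (hn : 2 ≤ n)
    (χ : ℚ_[p]ˣ →* ℂˣ)
    (hχ : ∀ u : ℚ_[p]ˣ, ‖(u : ℚ_[p]) - 1‖ ≤ (p : ℝ) ^ (-(n : ℤ)) → χ u = 1) :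
    (∃ c : ℤ_[p], ∀ v : ℚ_[p]ˣ,
        ‖(v : ℚ_[p]) - 1‖ ≤ (p : ℝ) ^ (-((n / 2 : ℕ) : ℤ)) →
        (χ v : ℂ) = ψ ((p : ℚ_[p]) ^ (-(n : ℤ)) * (c : ℚ_[p]) *
          (((v : ℚ_[p]) - 1) - ((v : ℚ_[p]) - 1) ^ 2 / 2))) ∧
    (∀ c c' : ℤ_[p],
        (∀ v : ℚ_[p]ˣ,
          ‖(v : ℚ_[p]) - 1‖ ≤ (p : ℝ) ^ (-((n / 2 : ℕ) : ℤ)) →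
          (χ v : ℂ) = ψ ((p : ℚ_[p]) ^ (-(n : ℤ)) * (c : ℚ_[p]) *
            (((v : ℚ_[p]) - 1) - ((v : ℚ_[p]) - 1) ^ 2 / 2))) →
        (∀ v : ℚ_[p]ˣ,
          ‖(v : ℚ_[p]) - 1‖ ≤ (p : ℝ) ^ (-((n / 2 : ℕ) : ℤ)) →
          (χ v : ℂ) = ψ ((p : ℚ_[p]) ^ (-(n : ℤ)) * (c' : ℚ_[p]) *
            (((v : ℚ_[p]) - 1) - ((v : ℚ_[p]) - 1) ^ 2 / 2))) →
        ‖(c : ℚ_[p]) - (c' : ℚ_[p])‖ ≤ (p : ℝ) ^ (-((n : ℤ) - (n / 2 : ℕ)))) := by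
  have hp : p.Prime := Fact.out
  have hpne : (p:ℚ_[p]) ≠ 0 := Nat.cast_ne_zero.mpr hp.ne_zero
  set m := n / 2 with hm
  set s := n - m with hs
  have hm1 : 1 ≤ m := by omega
  have hmn : m ≤ n := by omega
  have h3 : n ≤ 3*m := by omega
  have hs1 : 1 ≤ s := by omega
  -- additive character basics
  have ψ0 : ψ 0 = 1 := hψ1 0 (by simp)
  have ψadd : ∀ a b : ℚ_[p], ψ (a+b) = ψ a * ψ b := fun a b => ψ.map_add_eq_mul a b
  have ψcong : ∀ A B : ℚ_[p], ‖A - B‖ ≤ 1 → ψ A = ψ B := by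
    intro A B h
    have hAB : A = B + (A - B) := by ring
    rw [hAB, ψadd, hψ1 _ h, mul_one]
  have ψpow : ∀ (t : ℕ) (x : ℚ_[p]), ψ ((t:ℚ_[p]) * x) = ψ x ^ t := by
    intro t x
    rw [← nsmul_eq_mul, AddChar.map_nsmul_eq_pow]
  -- nontriviality at p⁻¹
  have hψp : ψ ((p:ℚ_[p])^(-1:ℤ)) ≠ 1 := by
    obtain ⟨x, hx1, hx2⟩ := hψ2
    intro hone
    apply hx2
    have ht : ‖(p:ℚ_[p]) * x‖ ≤ 1 := by
      rw [norm_mul, Padic.norm_p]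
      calc (p:ℝ)⁻¹ * ‖x‖ ≤ (p:ℝ)⁻¹ * p :=
        mul_le_mul_of_nonneg_left hx1 (by positivity)
      _ = 1 := inv_mul_cancel₀ (ne_of_gt p_pos')
    obtain ⟨a, ha⟩ := approx ((p:ℚ_[p]) * x) ht 1
    have hx : ψ x = ψ ((a:ℚ_[p]) * (p:ℚ_[p])^(-1:ℤ)) := by
      apply ψcong
      have hsplit : x - (a:ℚ_[p]) * (p:ℚ_[p])^(-1:ℤ)
          = (p:ℚ_[p])^(-1:ℤ) * ((p:ℚ_[p])*x - (a:ℚ_[p])) := by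
        rw [zpow_neg_one]
        field_simp
      rw [hsplit, norm_mul, Padic.norm_p_zpow]
      calc (p:ℝ)^(-(-1:ℤ)) * ‖(p:ℚ_[p])*x - (a:ℚ_[p])‖
          ≤ (p:ℝ)^(1:ℤ) * (p:ℝ)^(-1:ℤ) := by
            rw [neg_neg]
            exact mul_le_mul_of_nonneg_left ha (le_of_lt (zpos 1))
      _ = 1 := by rw [← zpow_add₀ (ne_of_gt p_pos')]; norm_num
    rw [hx, ψpow, hone, one_pow]
  -- the primitive root ζ
  set E : ℚ_[p] := (p:ℚ_[p])^(-(s:ℤ)) with hE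
  set ζ : ℂ := ψ E with hζ
  have hζpow : ∀ t : ℕ, ψ ((t:ℚ_[p]) * E) = ζ ^ t := fun t => ψpow t E
  have hord : orderOf ζ = p ^ s := by
    have hps : ((p^s : ℕ) : ℚ_[p]) * E = 1 := by
      push_cast
      rw [hE, ← zpow_natCast (p:ℚ_[p]) s, ← zpow_add₀ hpne]
      simp
    have h1 : ζ ^ (p^s) = 1 := by
      rw [← hζpow (p^s), hps]
      exact hψ1 1 (by simp)
    have hps2 : ((p^(s-1) : ℕ) : ℚ_[p]) * E = (p:ℚ_[p])^(-1:ℤ) := by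
      push_cast
      rw [hE, ← zpow_natCast (p:ℚ_[p]) (s-1), ← zpow_add₀ hpne]
      congr 1
      omega
    have h2 : ζ ^ (p^(s-1)) ≠ 1 := by
      rw [← hζpow (p^(s-1)), hps2]
      exact hψp
    have hdvd : orderOf ζ ∣ p ^ s := orderOf_dvd_of_pow_eq_one h1
    obtain ⟨j, hj, hjo⟩ := (Nat.dvd_prime_pow hp).mp hdvd
    rcases lt_or_ge j s with hlt | hge
    · exfalso
      apply h2
      apply orderOf_dvd_iff_pow_eq_one.mp
      rw [hjo]
      exact pow_dvd_pow p (by omega)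
    · rw [hjo]
      congr 1
      omega
  have hprim : IsPrimitiveRoot ζ (p^s) := hord ▸ IsPrimitiveRoot.orderOf ζ
  haveI : NeZero (p^s) := ⟨pow_ne_zero _ hp.ne_zero⟩
  -- base point u₀
  set q : ℚ_[p] := (p:ℚ_[p])^m with hq
  have hqnorm : ‖q‖ = (p:ℝ)^(-(m:ℤ)) := Padic.norm_p_pow m
  have hqne : q ≠ 0 := pow_ne_zero _ hpne
  set u₀ : ℚ_[p] := q + q^2/2 with hu₀def
  have hq2 : ‖q^2/2‖ ≤ (p:ℝ)^(-(m:ℤ)) := by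
    rw [norm_div_two hp2, pow_two]
    exact le_trans (nmul hqnorm.le hqnorm.le) (zmono (by omega))
  have hu₀ : ‖u₀‖ ≤ (p:ℝ)^(-(m:ℤ)) := nadd hqnorm.le hq2
  set w : ℚ_[p] := 1 - q^2/2 - q^3/8 with hwdef
  have hellu₀ : ell u₀ = q * w := by
    simp only [ell, hu₀def, hwdef]; ring
  have h8 : ‖(8:ℚ_[p])‖ = 1 := by
    have : (8:ℚ_[p]) = 2^3 := by norm_num
    rw [this, norm_pow, norm_two' hp2, one_pow]
  have hw2 : ‖w - 1‖ ≤ (p:ℝ)^(-(2*m:ℤ)) := by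
    have hsplit : w - 1 = -(q^2/2) + -(q^3/8) := by rw [hwdef]; ring
    rw [hsplit]
    apply nadd
    · rw [norm_neg, norm_div_two hp2, pow_two]
      exact le_trans (nmul hqnorm.le hqnorm.le) (zmono (by omega))
    · rw [norm_neg, norm_div, h8, div_one]
      have : q^3 = q*(q*q) := by ring
      rw [this]
      exact le_trans (nmul hqnorm.le (nmul hqnorm.le hqnorm.le)) (zmono (by omega))
  have hw1 : ‖w - 1‖ < 1 :=
    lt_of_le_of_lt hw2 (pz_lt_one (by omega))
  have hwnorm : ‖w‖ = 1 := by
    have hsplit : w = 1 + (w - 1) := by ring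
    rw [hsplit]
    exact norm_one_add hw1
  have hv₀ne : (1 + u₀) ≠ 0 := by
    have h1 : ‖1 + u₀‖ = 1 := norm_one_add (lt_of_le_of_lt hu₀ (pz_lt_one (by omega)))
    intro h0
    rw [h0] at h1
    simp at h1
  set v₀ : ℚ_[p]ˣ := Units.mk0 _ hv₀ne with hv₀def
  have hv₀coe : (v₀ : ℚ_[p]) = 1 + u₀ := rfl
  -- character congruence
  have charCong : ∀ v v' : ℚ_[p]ˣ, ‖(v' : ℚ_[p])‖ = 1 →
      ‖(v : ℚ_[p]) - (v' : ℚ_[p])‖ ≤ (p:ℝ)^(-(n:ℤ)) → χ v = χ v' := by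
    intro v v' h1 h2
    have hne : (v' : ℚ_[p]) ≠ 0 := v'.ne_zero
    have hv1 : χ (v'⁻¹ * v) = 1 := by
      apply hχ
      have hcoe : ((v'⁻¹ * v : ℚ_[p]ˣ) : ℚ_[p]) - 1
          = ((v:ℚ_[p]) - (v':ℚ_[p])) * ((v':ℚ_[p]))⁻¹ := by
        rw [Units.val_mul, Units.val_inv_eq_inv_val]
        field_simp
      rw [hcoe, norm_mul, norm_inv, h1, inv_one, mul_one]
      exact h2
    calc χ v = χ (v' * (v'⁻¹ * v)) := by rw [mul_inv_cancel_left]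
    _ = χ v' * χ (v'⁻¹ * v) := map_mul χ _ _
    _ = χ v' := by rw [hv1, mul_one]
  -- χ v₀ is a p^s-th root of unity
  have hNχ : ((χ v₀ : ℂˣ) : ℂ) ^ (p^s) = 1 := by
    have hu : (χ v₀) ^ (p^s) = 1 := by
      rw [← map_pow]
      apply hχ
      obtain ⟨hD1, hD2⟩ := ellD hp2 h3 hu₀ (p^s)
      have hterm : ‖((p^s : ℕ):ℚ_[p]) * ell u₀‖ ≤ (p:ℝ)^(-(n:ℤ)) := by
        rw [hellu₀, ← mul_assoc, norm_mul, norm_mul, hwnorm, mul_one, hqnorm]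
        have hcast : ‖((p^s:ℕ):ℚ_[p])‖ = (p:ℝ)^(-(s:ℤ)) := by
          push_cast
          exact Padic.norm_p_pow s
        rw [hcast, ← zpow_add₀ (ne_of_gt p_pos')]
        exact zmono (by omega)
      have hellW : ‖ell ((1+u₀)^(p^s) - 1) - ell 0‖ ≤ (p:ℝ)^(-(n:ℤ)) := by
        have hsplit : ell ((1+u₀)^(p^s) - 1) - ell 0
            = (ell ((1+u₀)^(p^s) - 1) - ((p^s:ℕ):ℚ_[p]) * ell u₀)
              + ((p^s:ℕ):ℚ_[p]) * ell u₀ := by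
          simp only [ell]; ring
        rw [hsplit]
        exact nadd hD2 hterm
      have hfin := ellB hp2 (le_trans hD1 (zmono (by omega)))
        (by rw [norm_zero]; exact (zpos _).le) hellW
      rw [Units.val_pow_eq_pow_val, hv₀coe]
      simpa using hfin
    rw [← Units.val_pow_eq_pow_val, hu, Units.val_one]
  obtain ⟨a, _, ha⟩ := hprim.eq_pow_of_pow_eq_one hNχ
  -- relate p^{-n} * q to E
  have hPq : (p:ℚ_[p])^(-(n:ℤ)) * q = E := by
    rw [hq, hE, ← zpow_natCast (p:ℚ_[p]) m, ← zpow_add₀ hpne]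
    congr 1
    omega
  have hEnorm : ‖E‖ = (p:ℝ)^(s:ℤ) := by
    rw [hE, Padic.norm_p_zpow, neg_neg]
  constructor
  · -- existence
    refine ⟨(a : ℤ_[p]), ?_⟩
    intro v hv
    set u : ℚ_[p] := (v:ℚ_[p]) - 1 with hu
    have hx : ‖ell u‖ ≤ (p:ℝ)^(-(m:ℤ)) := by
      have hsplit : ell u = u + -(u^2/2) := by simp only [ell]; ring
      rw [hsplit]
      refine nadd hv ?_
      rw [norm_neg, norm_div_two hp2, pow_two]
      exact le_trans (nmul hv hv) (zmono (by omega))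
    set y : ℚ_[p] := ell u / q with hy
    have hyq : ell u = q * y := by rw [hy]; field_simp
    have hy1 : ‖y‖ ≤ 1 := by
      rw [hy, norm_div, hqnorm, div_le_one (zpos _)]
      exact hx
    obtain ⟨k, hk⟩ := approx y hy1 s
    obtain ⟨hD1, hD2⟩ := ellD hp2 h3 hu₀ k
    have hdiff : ‖ell u - ell ((1+u₀)^k - 1)‖ ≤ (p:ℝ)^(-(n:ℤ)) := by
      have hsplit : ell u - ell ((1+u₀)^k - 1)
          = (q*y - (k:ℚ_[p]) * (q*w)) + ((k:ℚ_[p]) * ell u₀ - ell ((1+u₀)^k - 1)) := by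
        rw [hyq, hellu₀]; ring
      rw [hsplit]
      apply nadd
      · have hfac : q*y - (k:ℚ_[p])*(q*w) = q * ((y - k) + (k:ℚ_[p]) * (1 - w)) := by ring
        rw [hfac]
        have hknorm : ‖(k:ℚ_[p])‖ ≤ 1 := by
          have := Padic.norm_int_le_one (p := p) (k:ℤ)
          simpa using this
        have hterm2 : ‖(k:ℚ_[p])*(1-w)‖ ≤ (p:ℝ)^(-(s:ℤ)) := by
          rw [norm_mul]
          have h1w : ‖(1:ℚ_[p]) - w‖ ≤ (p:ℝ)^(-(2*m:ℤ)) := by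
            rw [norm_sub_rev]; exact hw2
          calc ‖(k:ℚ_[p])‖ * ‖1 - w‖ ≤ 1 * (p:ℝ)^(-(2*m:ℤ)) :=
            mul_le_mul hknorm h1w (norm_nonneg _) zero_le_one
          _ = (p:ℝ)^(-(2*m:ℤ)) := one_mul _
          _ ≤ (p:ℝ)^(-(s:ℤ)) := zmono (by omega)
        have hinner : ‖(y - k) + (k:ℚ_[p]) * (1 - w)‖ ≤ (p:ℝ)^(-(s:ℤ)) :=
          nadd hk hterm2
        calc ‖q * ((y - k) + (k:ℚ_[p]) * (1 - w))‖
            = ‖q‖ * ‖(y - k) + (k:ℚ_[p]) * (1 - w)‖ := norm_mul _ _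
        _ ≤ (p:ℝ)^(-(m:ℤ)) * (p:ℝ)^(-(s:ℤ)) :=
            mul_le_mul hqnorm.le hinner (norm_nonneg _) (zpos _).le
        _ = (p:ℝ)^(-(m:ℤ) + -(s:ℤ)) := (zpow_add₀ (ne_of_gt p_pos') _ _).symm
        _ ≤ (p:ℝ)^(-(n:ℤ)) := zmono (by omega)
      · rw [norm_sub_rev]
        exact hD2
    have husub : ‖u - ((1+u₀)^k - 1)‖ ≤ (p:ℝ)^(-(n:ℤ)) :=
      ellB hp2 (le_trans hv (zmono (by omega))) (le_trans hD1 (zmono (by omega))) hdiff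
    have hχeq : χ v = χ (v₀ ^ k) := by
      apply charCong
      · rw [Units.val_pow_eq_pow_val, hv₀coe]
        have hsplit : ((1+u₀):ℚ_[p])^k = 1 + ((1+u₀)^k - 1) := by ring
        rw [hsplit]
        exact norm_one_add (lt_of_le_of_lt hD1 (pz_lt_one (by omega)))
      · rw [Units.val_pow_eq_pow_val, hv₀coe]
        have hsplit : (v:ℚ_[p]) - (1+u₀)^k = u - ((1+u₀)^k - 1) := by rw [hu]; ring
        rw [hsplit]
        exact husub
    have hL : (χ v : ℂ) = ((χ v₀ : ℂˣ) : ℂ)^k := by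
      rw [hχeq, map_pow, Units.val_pow_eq_pow_val]
    have hgoalarg : (p:ℚ_[p])^(-(n:ℤ)) * (((a:ℤ_[p]):ℚ_[p])) * (u - u^2/2)
        = (a:ℚ_[p]) * (E * y) := by
      have hcast : (((a:ℕ):ℤ_[p]):ℚ_[p]) = ((a:ℕ):ℚ_[p]) := by push_cast; ring
      have hellu : u - u^2/2 = ell u := rfl
      rw [hcast, hellu, hyq, ← hPq]; ring
    rw [hL, hgoalarg]
    have step1 : ψ ((a:ℚ_[p]) * (E * y)) = ψ ((a:ℚ_[p]) * (E * (k:ℚ_[p]))) := by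
      apply ψcong
      have hfac : (a:ℚ_[p]) * (E*y) - (a:ℚ_[p]) * (E*(k:ℚ_[p]))
          = (a:ℚ_[p]) * (E * (y - k)) := by ring
      rw [hfac, norm_mul, norm_mul]
      have hanorm : ‖((a:ℕ):ℚ_[p])‖ ≤ 1 := by
        have := Padic.norm_int_le_one (p := p) (a:ℤ)
        simpa using this
      have hE2 : ‖E‖ * ‖y - (k:ℚ_[p])‖ ≤ (p:ℝ)^(s:ℤ) * (p:ℝ)^(-(s:ℤ)) := by
        rw [hEnorm]
        exact mul_le_mul_of_nonneg_left hk (zpos _).le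
      calc ‖((a:ℕ):ℚ_[p])‖ * (‖E‖ * ‖y - (k:ℚ_[p])‖)
          ≤ 1 * ((p:ℝ)^(s:ℤ) * (p:ℝ)^(-(s:ℤ))) :=
            mul_le_mul hanorm hE2 (by positivity) zero_le_one
      _ = 1 := by rw [one_mul, ← zpow_add₀ (ne_of_gt p_pos')]; simp
    have step2 : ψ ((a:ℚ_[p]) * (E * (k:ℚ_[p]))) = ((χ v₀ : ℂˣ) : ℂ)^k := by
      have hfac : (a:ℚ_[p]) * (E * (k:ℚ_[p])) = ((a*k : ℕ):ℚ_[p]) * E := by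
        push_cast; ring
      rw [hfac, hζpow (a*k), pow_mul, ha]
    rw [step1, step2]
  · -- uniqueness
    intro c c' h1 h2
    have hv₀mem : ‖(v₀:ℚ_[p]) - 1‖ ≤ (p:ℝ)^(-(m:ℤ)) := by
      rw [hv₀coe]
      simpa using hu₀
    have e1 := h1 v₀ hv₀mem
    have e2 := h2 v₀ hv₀mem
    have hsub : (v₀:ℚ_[p]) - 1 = u₀ := by rw [hv₀coe]; ring
    rw [hsub] at e1 e2
    have hqw : u₀ - u₀^2/2 = q * w := hellu₀
    rw [hqw] at e1 e2
    set P : ℚ_[p] := (p:ℚ_[p])^(-(n:ℤ)) with hP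
    have hψd : ψ (P * ((c:ℚ_[p]) - (c':ℚ_[p])) * (q*w)) = 1 := by
      have hA : ψ (P * (c:ℚ_[p]) * (q*w)) = ψ (P * (c':ℚ_[p]) * (q*w)) :=
        e1.symm.trans e2
      have hsplit : P * ((c:ℚ_[p]) - (c':ℚ_[p])) * (q*w) + P * (c':ℚ_[p]) * (q*w)
          = P * (c:ℚ_[p]) * (q*w) := by ring
      have hmul := ψadd (P * ((c:ℚ_[p]) - (c':ℚ_[p])) * (q*w)) (P * (c':ℚ_[p]) * (q*w))
      rw [hsplit, hA] at hmul
      have hne : ψ (P * (c':ℚ_[p]) * (q*w)) ≠ 0 := by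
        intro h0
        have hinv := ψadd (P * (c':ℚ_[p]) * (q*w)) (-(P * (c':ℚ_[p]) * (q*w)))
        rw [h0, zero_mul, add_neg_cancel, ψ0] at hinv
        exact one_ne_zero hinv
      exact mul_right_cancel₀ hne (hmul.symm.trans (one_mul _).symm)
    have hgoalexp : (p:ℝ) ^ (-((n:ℤ) - (m:ℤ))) = (p:ℝ)^(-(s:ℤ)) := by
      congr 1
      omega
    rw [hgoalexp]
    set d : ℚ_[p] := (c:ℚ_[p]) - (c':ℚ_[p]) with hd
    set e : ℚ_[p] := d * w with he
    have henorm : ‖e‖ = ‖d‖ := by rw [he, norm_mul, hwnorm, mul_one]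
    have hd1 : ‖d‖ ≤ 1 := by
      rw [hd, sub_eq_add_neg]
      refine nadd c.property ?_
      rw [norm_neg]
      exact c'.property
    have he1 : ‖e‖ ≤ 1 := henorm.le.trans hd1
    have hEe : ψ (E * e) = 1 := by
      rw [← hψd]
      congr 1
      rw [he, ← hPq]
      ring
    obtain ⟨b, hb⟩ := approx e he1 s
    have hEb : ψ (((b:ℕ):ℚ_[p]) * E) = 1 := by
      rw [← hEe]
      apply ψcong
      have hfac : ((b:ℕ):ℚ_[p]) * E - E * e = E * (((b:ℕ):ℚ_[p]) - e) := by ring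
      rw [hfac, norm_mul, hEnorm]
      have hbe : ‖((b:ℕ):ℚ_[p]) - e‖ ≤ (p:ℝ)^(-(s:ℤ)) := by
        rw [norm_sub_rev]; exact hb
      calc (p:ℝ)^(s:ℤ) * ‖((b:ℕ):ℚ_[p]) - e‖ ≤ (p:ℝ)^(s:ℤ) * (p:ℝ)^(-(s:ℤ)) :=
            mul_le_mul_of_nonneg_left hbe (zpos _).le
      _ = 1 := by rw [← zpow_add₀ (ne_of_gt p_pos')]; simp
    have hζb : ζ ^ b = 1 := by rw [← hζpow b]; exact hEb
    have hdvd : p^s ∣ b := by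
      have := orderOf_dvd_of_pow_eq_one hζb
      rwa [hord] at this
    have hbnorm : ‖((b:ℕ):ℚ_[p])‖ ≤ (p:ℝ)^(-(s:ℤ)) := by
      obtain ⟨t, ht⟩ := hdvd
      rw [ht]
      push_cast
      rw [norm_mul]
      have hps : ‖(p:ℚ_[p])^s‖ = (p:ℝ)^(-(s:ℤ)) := Padic.norm_p_pow s
      have htn : ‖((t:ℕ):ℚ_[p])‖ ≤ 1 := by
        have := Padic.norm_int_le_one (p := p) (t:ℤ)
        simpa using this
      calc ‖(p:ℚ_[p])^s‖ * ‖((t:ℕ):ℚ_[p])‖ ≤ (p:ℝ)^(-(s:ℤ)) * 1 :=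
            mul_le_mul hps.le htn (norm_nonneg _) (zpos _).le
      _ = (p:ℝ)^(-(s:ℤ)) := mul_one _
    have hefinal : ‖e‖ ≤ (p:ℝ)^(-(s:ℤ)) := by
      have hsplit : e = ((b:ℕ):ℚ_[p]) + (e - ((b:ℕ):ℚ_[p])) := by ring
      rw [hsplit]
      exact nadd hbnorm hb
    rw [henorm] at hefinal
    exact hefinal
end
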